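/- arXiv:1712.02989 — 2 statements merged into one kernel-verified Lean document; each statement's English description precedes it below -/
import Mathlib

section
/- There exists a constant C > 0 such that for every function v : [0,1] → ℝ that is three times continuously differentiable with v(0) = v(1) = 0, one has (∫₀¹ |v(x)|⁸ dx)^{1/8} ≤ C[ (∫₀¹ |v'''(x)|² dx)^{1/16} · (∫₀¹ |v(x)|² dx)^{7/16} + (∫₀¹ |v(x)|² dx)^{1/2} ]. -/
open Set MeasureTheory intervalIntegral
open scoped NNReal

noncomputable section
set_option maxHeartbeats 1000000

lemma gn_cs {f g : ℝ → ℝ} {a b : ℝ} (hab : a ≤ b) (hf : Continuous f) (hg : Continuous g) :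
    (∫ x in a..b, f x * g x) ^ 2 ≤ (∫ x in a..b, f x ^ 2) * (∫ x in a..b, g x ^ 2) := by
  set F := ∫ x in a..b, f x ^ 2 with hF
  set G := ∫ x in a..b, g x ^ 2 with hG
  set S := ∫ x in a..b, f x * g x with hS
  have key : ∀ l : ℝ, 0 ≤ G * (l * l) + (-2 * S) * l + F := by
    intro l
    have h0 : 0 ≤ ∫ x in a..b, (l * g x - f x) ^ 2 :=
      intervalIntegral.integral_nonneg hab (fun x _ => sq_nonneg _)
    have hexp : (∫ x in a..b, (l * g x - f x) ^ 2)
        = l^2 * G - 2 * l * S + F := by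
      have : ∀ x : ℝ, (l * g x - f x) ^ 2
          = l^2 * (g x ^ 2) - 2 * l * (f x * g x) + f x ^ 2 := by intro x; ring
      rw [intervalIntegral.integral_congr (fun x _ => this x)]
      rw [intervalIntegral.integral_add, intervalIntegral.integral_sub,
        intervalIntegral.integral_const_mul, intervalIntegral.integral_const_mul]
      · exact (continuous_const.mul (hg.pow 2)).intervalIntegrable a b
      · exact (continuous_const.mul (hf.mul hg)).intervalIntegrable a b
      · exact ((continuous_const.mul (hg.pow 2)).sub (continuous_const.mul (hf.mul hg))).intervalIntegrable a b
      · exact (hf.pow 2).intervalIntegrable a b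
    nlinarith [h0, hexp]
  have hd := discrim_le_zero key
  simp only [discrim] at hd
  nlinarith [hd]

lemma gn_pt {f : ℝ → ℝ} (hd : Differentiable ℝ f) (hc' : Continuous (deriv f))
    {t h s : ℝ} (hh : 0 < h) (hs : s ∈ Icc t (t + h)) :
    f s ^ 2 ≤ (1/h) * (∫ x in t..t+h, f x ^ 2)
      + 2 * ∫ x in t..t+h, |f x * deriv f x| := by
  have hcf : Continuous f := hd.continuous
  have hcff' : Continuous fun x => |f x * deriv f x| := (hcf.mul hc').abs
  have hE0 : 0 ≤ ∫ x in t..t+h, |f x * deriv f x| :=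
    intervalIntegral.integral_nonneg (by linarith) (fun x _ => abs_nonneg _)
  -- key pointwise estimate against every y in the interval
  have key : ∀ y ∈ Icc t (t + h),
      f s ^ 2 ≤ f y ^ 2 + 2 * ∫ x in t..t+h, |f x * deriv f x| := by
    intro y hy
    have hftc : (∫ x in y..s, 2 * (f x * deriv f x)) = f s ^ 2 - f y ^ 2 := by
      apply intervalIntegral.integral_eq_sub_of_hasDerivAt
      · intro x _
        have := ((hd x).hasDerivAt).fun_pow 2
        simpa [mul_comm, mul_assoc, mul_left_comm] using this
      · exact (continuous_const.mul (hcf.mul hc')).intervalIntegrable _ _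
    have habs : |∫ x in y..s, 2 * (f x * deriv f x)|
        ≤ ∫ x in t..t+h, 2 * |f x * deriv f x| := by
      have hint : IntervalIntegrable (fun x => 2 * |f x * deriv f x|) volume t (t+h) :=
        (continuous_const.mul hcff').intervalIntegrable _ _
      have hmono : ∀ {u v : ℝ}, t ≤ u → u ≤ v → v ≤ t + h →
          (∫ x in u..v, 2 * |f x * deriv f x|) ≤ ∫ x in t..t+h, 2 * |f x * deriv f x| := by
        intro u v h1 h2 h3
        exact intervalIntegral.integral_mono_interval h1 h2 h3
          (Filter.Eventually.of_forall (fun x => by positivity)) hint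
      rcases le_total y s with hys | hys
      · calc |∫ x in y..s, 2 * (f x * deriv f x)|
            ≤ ∫ x in y..s, |2 * (f x * deriv f x)| :=
              intervalIntegral.abs_integral_le_integral_abs hys
          _ = ∫ x in y..s, 2 * |f x * deriv f x| := by
              congr 1; funext x; rw [abs_mul, abs_two]
          _ ≤ _ := hmono hy.1 hys hs.2
      · rw [intervalIntegral.integral_symm, abs_neg]
        calc |∫ x in s..y, 2 * (f x * deriv f x)|
            ≤ ∫ x in s..y, |2 * (f x * deriv f x)| :=
              intervalIntegral.abs_integral_le_integral_abs hys
          _ = ∫ x in s..y, 2 * |f x * deriv f x| := by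
              congr 1; funext x; rw [abs_mul, abs_two]
          _ ≤ _ := hmono hs.1 hys hy.2
    have h2 : (∫ x in t..t+h, 2 * |f x * deriv f x|)
        = 2 * ∫ x in t..t+h, |f x * deriv f x| := intervalIntegral.integral_const_mul _ _
    have := (le_abs_self _).trans habs
    nlinarith [hftc, this, h2]
  -- integrate the key bound over y
  have hint1 : (∫ y in t..t+h, f s ^ 2)
      ≤ ∫ y in t..t+h, (f y ^ 2 + 2 * ∫ x in t..t+h, |f x * deriv f x|) := by
    apply intervalIntegral.integral_mono_on (by linarith)
    · exact intervalIntegrable_const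
    · exact ((hcf.pow 2).add continuous_const).intervalIntegrable _ _
    · exact key
  rw [intervalIntegral.integral_const] at hint1
  rw [intervalIntegral.integral_add (Continuous.intervalIntegrable (u := fun x => f x ^ 2) (hcf.pow 2) _ _)
    intervalIntegrable_const, intervalIntegral.integral_const] at hint1
  have hA0 : 0 ≤ ∫ x in t..t+h, f x ^ 2 :=
    intervalIntegral.integral_nonneg (by linarith) (fun x _ => sq_nonneg _)
  have hh' : t + h - t = h := by ring
  rw [hh'] at hint1
  simp only [smul_eq_mul] at hint1
  rw [div_mul_eq_mul_div, one_mul]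
  rw [← sub_nonneg] at hint1 ⊢
  have hkey : (∫ x in t..t+h, f x ^ 2) / h + 2 * (∫ x in t..t+h, |f x * deriv f x|) - f s ^ 2
      = (1/h) * ((∫ x in t..t+h, f x ^ 2) + h * (2 * ∫ x in t..t+h, |f x * deriv f x|) - h * f s ^ 2) := by
    field_simp
  rw [hkey]
  positivity

lemma gn_per {f : ℝ → ℝ} (hd : Differentiable ℝ f) (hd' : Differentiable ℝ (deriv f))
    (hc'' : Continuous (deriv (deriv f))) {t h : ℝ} (hh : 0 < h) :
    ∫ x in t..t+h, (deriv f x) ^ 2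
      ≤ 8/h^2 * (∫ x in t..t+h, f x ^ 2)
        + 16/h * (∫ x in t..t+h, |f x * deriv f x|)
        + 2*h^2 * ∫ x in t..t+h, (deriv (deriv f) x) ^ 2 := by
  have hcf : Continuous f := hd.continuous
  have hc' : Continuous (deriv f) := hd'.continuous
  have hlt : t < t + h := by linarith
  -- MVT: ξ with deriv f ξ = (f(t+h) - f t)/h
  obtain ⟨c, hc, hslope⟩ := exists_deriv_eq_slope f hlt hcf.continuousOn
    (hd.differentiableOn)
  -- abbreviations
  set A := ∫ x in t..t+h, f x ^ 2 with hA
  set E := ∫ x in t..t+h, |f x * deriv f x| with hE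
  set D := ∫ x in t..t+h, (deriv (deriv f) x) ^ 2 with hD
  set J := ∫ x in t..t+h, |deriv (deriv f) x| with hJ
  have hJ0 : 0 ≤ J := intervalIntegral.integral_nonneg hlt.le (fun x _ => abs_nonneg _)
  have hA0 : 0 ≤ A := intervalIntegral.integral_nonneg hlt.le (fun x _ => sq_nonneg _)
  have hE0 : 0 ≤ E := intervalIntegral.integral_nonneg hlt.le (fun x _ => abs_nonneg _)
  have hD0 : 0 ≤ D := intervalIntegral.integral_nonneg hlt.le (fun x _ => sq_nonneg _)
  -- J² ≤ h * D by Cauchy-Schwarz with g = 1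
  have hJ2 : J ^ 2 ≤ h * D := by
    have hcs := gn_cs (f := fun x => |deriv (deriv f) x|) (g := fun _ => (1:ℝ)) hlt.le
      hc''.abs continuous_const
    simp only [mul_one, one_pow, sq_abs, intervalIntegral.integral_const, smul_eq_mul] at hcs
    have h3 : t + h - t = h := by ring
    rw [h3] at hcs
    nlinarith [hcs]
  -- pointwise bound on deriv f
  have hpt : ∀ x ∈ Icc t (t+h), (deriv f x) ^ 2 ≤ 2 * ((f (t+h) - f t)/h)^2 + 2 * J^2 := by
    intro x hx
    have hftc : (∫ u in c..x, deriv (deriv f) u) = deriv f x - deriv f c := by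
      apply intervalIntegral.integral_eq_sub_of_hasDerivAt
      · exact fun u _ => (hd' u).hasDerivAt
      · exact hc''.intervalIntegrable _ _
    have habs : |deriv f x - deriv f c| ≤ J := by
      rw [← hftc]
      have hint : IntervalIntegrable (fun x => |deriv (deriv f) x|) volume t (t+h) :=
        hc''.abs.intervalIntegrable _ _
      have hci : c ∈ Icc t (t+h) := ⟨hc.1.le, hc.2.le⟩
      rcases le_total c x with hcx | hcx
      · calc |∫ u in c..x, deriv (deriv f) u| ≤ ∫ u in c..x, |deriv (deriv f) u| :=
            intervalIntegral.abs_integral_le_integral_abs hcx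
          _ ≤ J := intervalIntegral.integral_mono_interval hci.1 hcx hx.2
              (Filter.Eventually.of_forall (fun x => abs_nonneg _)) hint
      · rw [intervalIntegral.integral_symm, abs_neg]
        calc |∫ u in x..c, deriv (deriv f) u| ≤ ∫ u in x..c, |deriv (deriv f) u| :=
            intervalIntegral.abs_integral_le_integral_abs hcx
          _ ≤ J := intervalIntegral.integral_mono_interval hx.1 hcx hci.2
              (Filter.Eventually.of_forall (fun x => abs_nonneg _)) hint
    have h1 : |deriv f x| ≤ |(f (t+h) - f t)/h| + J := by
      have := abs_sub_abs_le_abs_sub (deriv f x) (deriv f c)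
      rw [hslope] at *
      have h2 : |deriv f x| ≤ |(f (t+h) - f t)/(t+h-t)| + |deriv f x - (f (t+h) - f t)/(t+h-t)| := by
        calc |deriv f x| = |(f (t+h) - f t)/(t+h-t) + (deriv f x - (f (t+h) - f t)/(t+h-t))| := by ring_nf
          _ ≤ _ := abs_add_le _ _
      have h3 : t + h - t = h := by ring
      rw [h3] at h2
      rw [h3] at habs
      linarith [h2, habs]
    calc (deriv f x)^2 = |deriv f x|^2 := (sq_abs _).symm
      _ ≤ (|(f (t+h) - f t)/h| + J)^2 := by
          apply pow_le_pow_left₀ (abs_nonneg _) h1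
      _ ≤ 2 * ((f (t+h) - f t)/h)^2 + 2*J^2 := by
          have := sq_abs ((f (t+h) - f t)/h)
          nlinarith [sq_nonneg (|(f (t+h) - f t)/h| - J)]
  -- integrate
  have hint1 : (∫ x in t..t+h, (deriv f x)^2)
      ≤ ∫ x in t..t+h, (2 * ((f (t+h) - f t)/h)^2 + 2 * J^2) := by
    apply intervalIntegral.integral_mono_on hlt.le
      ((hc'.pow 2).intervalIntegrable _ _) intervalIntegrable_const hpt
  rw [intervalIntegral.integral_const] at hint1
  have h3 : t + h - t = h := by ring
  rw [h3] at hint1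
  simp only [smul_eq_mul] at hint1
  -- endpoint values
  have hps : f t ^ 2 ≤ (1/h) * A + 2 * E :=
    gn_pt hd hc' hh ⟨le_refl t, by linarith⟩
  have hpe : f (t+h) ^ 2 ≤ (1/h) * A + 2 * E :=
    gn_pt hd hc' hh ⟨by linarith, le_refl _⟩
  -- combine
  have hdelta : ((f (t+h) - f t)/h)^2 ≤ (2 * ((1/h)*A + 2*E) * 2) / h^2 := by
    rw [div_pow, div_le_div_iff₀ (by positivity) (by positivity)]
    nlinarith [sq_nonneg (f (t+h) + f t), hps, hpe, sq_nonneg h]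
  have hhd : h * (2 * ((f (t+h) - f t)/h)^2 + 2*J^2) ≤ 8/h^2*A + 16/h*E + 2*h^2*D := by
    have e1 : h * (2 * ((f (t+h) - f t)/h)^2) ≤ h * (2 * ((2 * ((1/h)*A + 2*E) * 2) / h^2)) := by
      apply mul_le_mul_of_nonneg_left _ hh.le
      linarith [hdelta]
    have e2 : h * (2 * ((2 * ((1/h)*A + 2*E) * 2) / h^2)) = 8/h^2*A + 16/h*E := by
      field_simp; ring
    have e3 : h * (2*J^2) ≤ 2*h^2*D := by
      have h5 := mul_le_mul_of_nonneg_left hJ2 (by positivity : (0:ℝ) ≤ 2*h)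
      have r1 : h * (2*J^2) = 2*h*J^2 := by ring
      have r2 : 2*h*(h*D) = 2*h^2*D := by ring
      linarith [h5]
    linarith [e1, e2, e3]
  linarith [hint1, hhd]

lemma gn_sub {f : ℝ → ℝ} (hd : Differentiable ℝ f) (hd' : Differentiable ℝ (deriv f))
    (hc'' : Continuous (deriv (deriv f))) {N : ℕ} (hN : 0 < N) :
    ∫ x in (0:ℝ)..1, (deriv f x) ^ 2
      ≤ 8*N^2 * (∫ x in (0:ℝ)..1, f x ^ 2)
        + 16*N * (∫ x in (0:ℝ)..1, |f x * deriv f x|)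
        + 2/N^2 * ∫ x in (0:ℝ)..1, (deriv (deriv f) x) ^ 2 := by
  have hcf : Continuous f := hd.continuous
  have hc' : Continuous (deriv f) := hd'.continuous
  have hNR : (0:ℝ) < N := by exact_mod_cast hN
  set a : ℕ → ℝ := fun i => i / N with ha
  have ha0 : a 0 = 0 := by simp [ha]
  have haN : a N = 1 := by simp only [ha]; exact div_self hNR.ne'
  have sum4 : ∀ (g : ℝ → ℝ), Continuous g →
      (∑ i ∈ Finset.range N, ∫ x in a i..a (i+1), g x) = ∫ x in (0:ℝ)..1, g x := by
    intro g hg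
    have := intervalIntegral.sum_integral_adjacent_intervals
      (a := a) (μ := volume) (n := N) (fun i _ => hg.intervalIntegrable _ _)
    rw [ha0, haN] at this; exact this
  have per : ∀ i ∈ Finset.range N,
      (∫ x in a i..a (i+1), (deriv f x) ^ 2)
        ≤ 8*N^2 * (∫ x in a i..a (i+1), f x ^ 2)
          + 16*N * (∫ x in a i..a (i+1), |f x * deriv f x|)
          + 2/N^2 * ∫ x in a i..a (i+1), (deriv (deriv f) x) ^ 2 := by
    intro i _
    have hstep : a (i+1) = a i + 1/N := by
      simp only [ha]; push_cast; field_simp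
    have hper := gn_per hd hd' hc'' (t := a i) (h := 1/(N:ℝ)) (by positivity)
    rw [← hstep] at hper
    have c1 : 8/((1:ℝ)/(N:ℝ))^2 = 8*(N:ℝ)^2 := by field_simp
    have c2 : 16/((1:ℝ)/(N:ℝ)) = 16*(N:ℝ) := by field_simp
    have c3 : 2*((1:ℝ)/(N:ℝ))^2 = 2/(N:ℝ)^2 := by field_simp
    rw [c1, c2, c3] at hper
    exact hper
  have hsum := Finset.sum_le_sum per
  rw [sum4 (fun x => deriv f x ^ 2) (hc'.pow 2)] at hsum
  simp only [Finset.sum_add_distrib, ← Finset.mul_sum] at hsum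
  rw [sum4 (fun x => f x ^ 2) (hcf.pow 2), sum4 (fun x => |f x * deriv f x|) ((hcf.mul hc').abs), sum4 (fun x => deriv (deriv f) x ^ 2) (hc''.pow 2)] at hsum
  exact hsum

lemma gn_sub2 {f : ℝ → ℝ} (hd : Differentiable ℝ f) (hd' : Differentiable ℝ (deriv f))
    (hc'' : Continuous (deriv (deriv f))) {N : ℕ} (hN : 0 < N) :
    ∫ x in (0:ℝ)..1, (deriv f x) ^ 2
      ≤ 272*N^2 * (∫ x in (0:ℝ)..1, f x ^ 2)
        + 4/N^2 * ∫ x in (0:ℝ)..1, (deriv (deriv f) x) ^ 2 := by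
  have hcf : Continuous f := hd.continuous
  have hc' : Continuous (deriv f) := hd'.continuous
  set A := ∫ x in (0:ℝ)..1, f x ^ 2 with hA
  set B := ∫ x in (0:ℝ)..1, (deriv f x) ^ 2 with hB
  set D := ∫ x in (0:ℝ)..1, (deriv (deriv f) x) ^ 2 with hD
  set E := ∫ x in (0:ℝ)..1, |f x * deriv f x| with hE
  have hA0 : 0 ≤ A := intervalIntegral.integral_nonneg (by norm_num) (fun x _ => sq_nonneg _)
  have hB0 : 0 ≤ B := intervalIntegral.integral_nonneg (by norm_num) (fun x _ => sq_nonneg _)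
  have hE0 : 0 ≤ E := intervalIntegral.integral_nonneg (by norm_num) (fun x _ => abs_nonneg _)
  have hNR : (0:ℝ) < N := by exact_mod_cast hN
  have hE2 : E ^ 2 ≤ A * B := by
    have := gn_cs (a := (0:ℝ)) (b := 1) (by norm_num) hcf.abs hc'.abs
    simp only [sq_abs] at this
    have he : (∫ x in (0:ℝ)..1, |f x| * |deriv f x|) = E := by
      rw [hE]; congr 1; funext x; rw [abs_mul]
    rwa [he] at this
  have hEs : E ≤ Real.sqrt A * Real.sqrt B := by
    have h1 : E = Real.sqrt (E^2) := by rw [Real.sqrt_sq hE0]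
    rw [h1, ← Real.sqrt_mul hA0]
    exact Real.sqrt_le_sqrt hE2
  have ham : 16*(N:ℝ)*E ≤ 128*N^2*A + B/2 := by
    have h2 : 16*(N:ℝ)*(Real.sqrt A * Real.sqrt B) ≤ 128*N^2*A + B/2 := by
      nlinarith [sq_nonneg (16*(N:ℝ)*Real.sqrt A - Real.sqrt B), Real.sq_sqrt hA0,
        Real.sq_sqrt hB0, Real.sqrt_nonneg A, Real.sqrt_nonneg B, sq_nonneg (N:ℝ)]
    nlinarith [mul_le_mul_of_nonneg_left hEs (by positivity : (0:ℝ) ≤ 16*(N:ℝ))]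
  have hs := gn_sub hd hd' hc'' hN
  rw [← hA, ← hB, ← hD, ← hE] at hs
  have h2 : 4/(N:ℝ)^2*D = 2*(2/(N:ℝ)^2*D) := by ring
  linarith [hs, ham]

/-- Landau-type interpolation on `[0,1]`. -/

lemma gn_landau {f : ℝ → ℝ} (hd : Differentiable ℝ f) (hd' : Differentiable ℝ (deriv f))
    (hc'' : Continuous (deriv (deriv f))) :
    ∫ x in (0:ℝ)..1, (deriv f x) ^ 2
      ≤ 1092 * ((∫ x in (0:ℝ)..1, f x ^ 2)
          + Real.sqrt (∫ x in (0:ℝ)..1, f x ^ 2)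
            * Real.sqrt (∫ x in (0:ℝ)..1, (deriv (deriv f) x) ^ 2)) := by
  set A := ∫ x in (0:ℝ)..1, f x ^ 2 with hA
  set B := ∫ x in (0:ℝ)..1, (deriv f x) ^ 2 with hB
  set D := ∫ x in (0:ℝ)..1, (deriv (deriv f) x) ^ 2 with hD
  have hA0 : 0 ≤ A := intervalIntegral.integral_nonneg (by norm_num) (fun x _ => sq_nonneg _)
  have hB0 : 0 ≤ B := intervalIntegral.integral_nonneg (by norm_num) (fun x _ => sq_nonneg _)
  have hD0 : 0 ≤ D := intervalIntegral.integral_nonneg (by norm_num) (fun x _ => sq_nonneg _)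
  have hsA0 : 0 ≤ Real.sqrt A * Real.sqrt D := by positivity
  rcases le_or_gt D A with hDA | hAD
  · -- N = 1
    have h1 := gn_sub2 hd hd' hc'' (N := 1) one_pos
    rw [← hA, ← hB, ← hD] at h1
    push_cast at h1
    nlinarith [h1]
  · -- A < D, so D > 0
    have hDpos : 0 < D := lt_of_le_of_lt hA0 hAD
    rcases eq_or_lt_of_le hA0 with hA0' | hApos
    · -- A = 0 : then B ≤ 4 D / n² for all n forces B ≤ 0
      by_contra hcon
      push_neg at hcon
      have hBpos : 0 < B := lt_of_le_of_lt (by positivity) hcon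
      obtain ⟨n, hn⟩ := exists_nat_gt (max 1 (4*D/B))
      have hn1 : (1:ℝ) < n := lt_of_le_of_lt (le_max_left _ _) hn
      have hnnR : (0:ℝ) < n := by linarith
      have hnn : 0 < n := by exact_mod_cast hnnR
      have hsub := gn_sub2 hd hd' hc'' hnn
      rw [← hA, ← hB, ← hD, ← hA0'] at hsub
      have f1 : B * (n:ℝ)^2 ≤ 4 * D := by
        have h4 : 272*(n:ℝ)^2*0 + 4/(n:ℝ)^2*D = 4*D/(n:ℝ)^2 := by ring
        rw [h4] at hsub
        exact (le_div_iff₀ (by positivity)).mp hsub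
      have f2 : 4*D < (n:ℝ)*B := by
        have := lt_of_le_of_lt (le_max_right 1 (4*D/B)) hn
        calc 4*D = (4*D/B)*B := by field_simp
          _ < (n:ℝ)*B := by
              exact mul_lt_mul_of_pos_right this hBpos
      nlinarith [f1, f2, hBpos, hn1]
    · -- 0 < A < D
      set r := Real.sqrt (Real.sqrt (D/A)) with hr
      have hDA0 : 0 ≤ D/A := by positivity
      have hDA1 : 1 ≤ D/A := (one_le_div hApos).mpr hAD.le
      have hr1 : 1 ≤ r := by
        have h1 : 1 ≤ Real.sqrt (D/A) := by
          rw [show (1:ℝ) = Real.sqrt 1 by simp]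
          exact Real.sqrt_le_sqrt hDA1
        rw [hr, show (1:ℝ) = Real.sqrt 1 by simp]
        exact Real.sqrt_le_sqrt (by simpa using h1)
      have hr0 : 0 < r := by linarith
      have hr2 : r^2 = Real.sqrt (D/A) := Real.sq_sqrt (Real.sqrt_nonneg _)
      set N := ⌈r⌉₊ with hNdef
      have hN : 0 < N := Nat.ceil_pos.mpr hr0
      have hnr : r ≤ (N:ℝ) := Nat.le_ceil r
      have hnr2 : (N:ℝ) ≤ 2*r := by
        have := Nat.ceil_lt_add_one (le_of_lt hr0)
        linarith
      have hsub := gn_sub2 hd hd' hc'' hN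
      rw [← hA, ← hB, ← hD] at hsub
      -- identify r² A and D / r²
      have hsqdiv : Real.sqrt (D/A) = Real.sqrt D / Real.sqrt A :=
        Real.sqrt_div hD0 A
      have hsA : Real.sqrt A > 0 := Real.sqrt_pos.mpr hApos
      have hsD : Real.sqrt D > 0 := Real.sqrt_pos.mpr hDpos
      have id1 : r^2 * A = Real.sqrt A * Real.sqrt D := by
        rw [hr2, hsqdiv]
        calc Real.sqrt D / Real.sqrt A * A = Real.sqrt D * (A / Real.sqrt A) := by ring
          _ = Real.sqrt D * Real.sqrt A := by rw [Real.div_sqrt]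
          _ = Real.sqrt A * Real.sqrt D := mul_comm _ _
      have id2 : D / r^2 = Real.sqrt A * Real.sqrt D := by
        rw [hr2, hsqdiv, div_div_eq_mul_div]
        calc D * Real.sqrt A / Real.sqrt D = (D / Real.sqrt D) * Real.sqrt A := by ring
          _ = Real.sqrt D * Real.sqrt A := by rw [Real.div_sqrt]
          _ = Real.sqrt A * Real.sqrt D := mul_comm _ _
      have t1 : 272*(N:ℝ)^2*A ≤ 1088*(Real.sqrt A * Real.sqrt D) := by
        have hN0 : (0:ℝ) ≤ (N:ℝ) := Nat.cast_nonneg N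
        have hN2 : (272*(N:ℝ)^2) ≤ 272*(4*r^2) := by nlinarith [hnr2, hr0, hN0]
        calc 272*(N:ℝ)^2*A ≤ 272*(4*r^2)*A := mul_le_mul_of_nonneg_right hN2 hA0
          _ = 1088*(r^2*A) := by ring
          _ = 1088*(Real.sqrt A * Real.sqrt D) := by rw [id1]
      have t2 : 4/(N:ℝ)^2*D ≤ 4*(Real.sqrt A * Real.sqrt D) := by
        have hrN : r^2 ≤ (N:ℝ)^2 := by nlinarith [hnr, hr0]
        have : D/(N:ℝ)^2 ≤ D/r^2 := by
          apply div_le_div_of_nonneg_left hD0 (by positivity) hrN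
        calc 4/(N:ℝ)^2*D = 4*(D/(N:ℝ)^2) := by ring
          _ ≤ 4*(D/r^2) := by linarith
          _ = 4*(Real.sqrt A * Real.sqrt D) := by rw [id2]
      have hA' : 0 ≤ 1092 * A := by positivity
      linarith [hsub, t1, t2]

lemma gn_ibp {v : ℝ → ℝ} (hdv : Differentiable ℝ v) (hdv1 : Differentiable ℝ (deriv v))
    (hc2 : Continuous (deriv (deriv v))) (h0 : v 0 = 0) (h1 : v 1 = 0) :
    (∫ x in (0:ℝ)..1, (deriv v x)^2) = - ∫ x in (0:ℝ)..1, v x * deriv (deriv v) x := by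
  have hibp := intervalIntegral.integral_mul_deriv_eq_deriv_mul
    (u := v) (v := deriv v) (u' := deriv v) (v' := deriv (deriv v)) (a := (0:ℝ)) (b := 1)
    (fun x _ => (hdv x).hasDerivAt) (fun x _ => (hdv1 x).hasDerivAt)
    (hdv1.continuous.intervalIntegrable _ _) (hc2.intervalIntegrable _ _)
  rw [h0, h1] at hibp
  have : (∫ x in (0:ℝ)..1, deriv v x * deriv v x) = ∫ x in (0:ℝ)..1, (deriv v x)^2 := by
    congr 1; funext x; ring
  rw [this] at hibp
  linarith [hibp]

lemma gn_rpow_add {x y : ℝ} (hx : 0 ≤ x) (hy : 0 ≤ y) :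
    (x + y) ^ ((1:ℝ)/8) ≤ x ^ ((1:ℝ)/8) + y ^ ((1:ℝ)/8) := by
  have h := NNReal.rpow_add_le_add_rpow (Real.toNNReal x) (Real.toNNReal y)
    (by norm_num : (0:ℝ) ≤ 1/8) (by norm_num : (1:ℝ)/8 ≤ 1)
  have hc : ((Real.toNNReal x + Real.toNNReal y : ℝ≥0) : ℝ) = x + y := by
    push_cast [Real.coe_toNNReal x hx, Real.coe_toNNReal y hy]; ring
  calc (x + y) ^ ((1:ℝ)/8)
      = (((Real.toNNReal x + Real.toNNReal y : ℝ≥0) : ℝ)) ^ ((1:ℝ)/8) := by rw [hc]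
    _ = (((Real.toNNReal x + Real.toNNReal y) ^ ((1:ℝ)/8) : ℝ≥0) : ℝ) := by
        rw [NNReal.coe_rpow]
    _ ≤ (((Real.toNNReal x) ^ ((1:ℝ)/8) + (Real.toNNReal y) ^ ((1:ℝ)/8) : ℝ≥0) : ℝ) := by
        exact_mod_cast h
    _ = x ^ ((1:ℝ)/8) + y ^ ((1:ℝ)/8) := by
        push_cast [NNReal.coe_rpow, Real.coe_toNNReal x hx, Real.coe_toNNReal y hy]; ring

example (v : ℝ → ℝ) (hv : ContDiff ℝ 3 v) :
    Differentiable ℝ v ∧ Differentiable ℝ (deriv v) ∧ Differentiable ℝ (deriv (deriv v))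
      ∧ Continuous (deriv (deriv (deriv v))) := by
  have h3 : ContDiff ℝ ((2:WithTop ℕ∞) + 1) v := by exact_mod_cast hv
  obtain ⟨hd0, -, h2⟩ := contDiff_succ_iff_deriv.mp h3
  have h2' : ContDiff ℝ ((1:WithTop ℕ∞) + 1) (deriv v) := by exact_mod_cast h2
  obtain ⟨hd1, -, h1c⟩ := contDiff_succ_iff_deriv.mp h2'
  have h1'' : ContDiff ℝ ((0:WithTop ℕ∞) + 1) (deriv (deriv v)) := by exact_mod_cast h1c
  obtain ⟨hd2, -, h0c⟩ := contDiff_succ_iff_deriv.mp h1''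
  exact ⟨hd0, hd1, hd2, h0c.continuous⟩

/-- the Gagliardo–Nirenberg interpolation inequality
`‖v‖_{L⁸(0,1)} ≤ C(‖v'''‖_{L²(0,1)}^{1/8} ‖v‖_{L²(0,1)}^{7/8} + ‖v‖_{L²(0,1)})`,
with a universal constant `C`, for `C³` functions vanishing at the endpoints. -/
theorem gagliardo_nirenberg_L8 :
    ∃ C : ℝ, 0 < C ∧ ∀ v : ℝ → ℝ, ContDiff ℝ 3 v → v 0 = 0 → v 1 = 0 →
      (∫ x in (0:ℝ)..1, |v x| ^ 8) ^ ((1:ℝ)/8)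
        ≤ C * ((∫ x in (0:ℝ)..1, |iteratedDeriv 3 v x| ^ 2) ^ ((1:ℝ)/16)
                 * (∫ x in (0:ℝ)..1, |v x| ^ 2) ^ ((7:ℝ)/16)
               + (∫ x in (0:ℝ)..1, |v x| ^ 2) ^ ((1:ℝ)/2)) := by
  refine ⟨100, by norm_num, ?_⟩
  intro v hv h0 h1
  -- extract smoothness
  have h3 : ContDiff ℝ ((2:WithTop ℕ∞) + 1) v := by exact_mod_cast hv
  obtain ⟨hd0, -, h2⟩ := contDiff_succ_iff_deriv.mp h3
  have h2' : ContDiff ℝ ((1:WithTop ℕ∞) + 1) (deriv v) := by exact_mod_cast h2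
  obtain ⟨hd1, -, h1c⟩ := contDiff_succ_iff_deriv.mp h2'
  have h1'' : ContDiff ℝ ((0:WithTop ℕ∞) + 1) (deriv (deriv v)) := by exact_mod_cast h1c
  obtain ⟨hd2, -, h0c⟩ := contDiff_succ_iff_deriv.mp h1''
  have hc3 : Continuous (deriv (deriv (deriv v))) := h0c.continuous
  have hcv : Continuous v := hd0.continuous
  have hc1 : Continuous (deriv v) := hd1.continuous
  have hc2 : Continuous (deriv (deriv v)) := hd2.continuous
  -- identify iterated derivative
  have hiter : iteratedDeriv 3 v = deriv (deriv (deriv v)) := by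
    rw [show (3:ℕ) = 2 + 1 from rfl, iteratedDeriv_succ,
      show (2:ℕ) = 1 + 1 from rfl, iteratedDeriv_succ, iteratedDeriv_one]
  -- abbreviations
  set A := ∫ x in (0:ℝ)..1, (v x)^2 with hA
  set B := ∫ x in (0:ℝ)..1, (deriv v x)^2 with hB
  set Cc := ∫ x in (0:ℝ)..1, (deriv (deriv v) x)^2 with hCc
  set D := ∫ x in (0:ℝ)..1, (deriv (deriv (deriv v)) x)^2 with hD
  set E := ∫ x in (0:ℝ)..1, |v x * deriv v x| with hEdef
  set V8 := ∫ x in (0:ℝ)..1, (v x)^8 with hV8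
  have hA0 : 0 ≤ A := intervalIntegral.integral_nonneg (by norm_num) (fun x _ => sq_nonneg _)
  have hB0 : 0 ≤ B := intervalIntegral.integral_nonneg (by norm_num) (fun x _ => sq_nonneg _)
  have hD0 : 0 ≤ D := intervalIntegral.integral_nonneg (by norm_num) (fun x _ => sq_nonneg _)
  have hE0 : 0 ≤ E := intervalIntegral.integral_nonneg (by norm_num) (fun x _ => abs_nonneg _)
  have hV80 : 0 ≤ V8 := intervalIntegral.integral_nonneg (by norm_num)
    (fun x _ => by positivity)
  -- rewrite the goal integrals
  have habs2 : (∫ x in (0:ℝ)..1, |v x|^2) = A := by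
    rw [hA]; congr 1; funext x; rw [sq_abs]
  have habs8 : (∫ x in (0:ℝ)..1, |v x|^8) = V8 := by
    rw [hV8]; congr 1; funext x
    rw [pow_abs, abs_of_nonneg (by positivity)]
  have habsD : (∫ x in (0:ℝ)..1, |iteratedDeriv 3 v x|^2) = D := by
    rw [hD, hiter]; congr 1; funext x; rw [sq_abs]
  rw [habs2, habs8, habsD]
  -- shorthand square roots
  set sa := Real.sqrt A with hsa
  set sb := Real.sqrt B with hsb
  set sd := Real.sqrt D with hsd
  have hsa0 : 0 ≤ sa := Real.sqrt_nonneg A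
  have hsb0 : 0 ≤ sb := Real.sqrt_nonneg B
  have hsd0 : 0 ≤ sd := Real.sqrt_nonneg D
  have hsa2 : sa^2 = A := Real.sq_sqrt hA0
  have hsb2 : sb^2 = B := Real.sq_sqrt hB0
  have hsd2 : sd^2 = D := Real.sq_sqrt hD0
  -- Step 1: B² ≤ A Cc
  have hB2 : B^2 ≤ A * Cc := by
    have hibp := gn_ibp hd0 hd1 hc2 h0 h1
    have hcs := gn_cs (a := (0:ℝ)) (b := 1) (by norm_num) hcv hc2
    rw [← hA, ← hCc] at hcs
    rw [← hB] at hibp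
    nlinarith [hcs, hibp]
  -- Step 2: Landau
  have hLan : Cc ≤ 1092*(B + sb*sd) := by
    have := gn_landau hd1 hd2 hc3
    rw [← hB, ← hCc, ← hD, ← hsb, ← hsd] at this
    exact this
  -- Step 3: B·√B ≤ 102648 (A√A + A√D)
  have hB32 : B*sb ≤ 102648*(A*sa + A*sd) := by
    rcases eq_or_lt_of_le hB0 with hB0' | hBpos
    · rw [← hB0']
      have : (0:ℝ)*sb = 0 := by ring
      rw [this]
      positivity
    · have hbb : sb*sb = B := by rw [← hsb2]; ring
      have hBD : B^2 ≤ 1092*A*B + 1092*A*(sb*sd) := by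
        have hm := mul_le_mul_of_nonneg_left hLan hA0
        have e : A*(1092*(B + sb*sd)) = 1092*A*B + 1092*A*(sb*sd) := by ring
        linarith [hB2, hm]
      rcases le_or_gt D B with hDB | hBD2
      · have hdb : sd ≤ sb := Real.sqrt_le_sqrt hDB
        have hsBD : sb*sd ≤ B := by
          have h' : sb*sd ≤ sb*sb := mul_le_mul_of_nonneg_left hdb hsb0
          linarith [h', hbb]
        have hBA : B ≤ 2184*A := by
          have hm2 : A*(sb*sd) ≤ A*B := mul_le_mul_of_nonneg_left hsBD hA0
          have h'' : B*B ≤ (2184*A)*B := by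
            have e2 : B^2 = B*B := sq B
            nlinarith [hBD, hm2]
          exact le_of_mul_le_mul_right h'' hBpos
        have hsB : sb ≤ 47*sa := by
          rw [hsb, hsa]
          calc Real.sqrt B ≤ Real.sqrt (2184*A) := Real.sqrt_le_sqrt hBA
            _ ≤ Real.sqrt (2209*A) := Real.sqrt_le_sqrt (by linarith)
            _ = 47*Real.sqrt A := by
                rw [show (2209:ℝ) = 47^2 by norm_num,
                  Real.sqrt_mul (by positivity) A, Real.sqrt_sq (by norm_num)]
        have hAsd : 0 ≤ A*sd := by positivity
        calc B*sb ≤ (2184*A)*(47*sa) :=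
              mul_le_mul hBA hsB hsb0 (by positivity)
          _ = 102648*(A*sa) := by ring
          _ ≤ 102648*(A*sa + A*sd) := by linarith [hAsd]
      · have h5 : sb ≤ sd := Real.sqrt_le_sqrt hBD2.le
        have h6 : B ≤ sb*sd := by
          have h' : sb*sb ≤ sb*sd := mul_le_mul_of_nonneg_left h5 hsb0
          linarith [h', hbb]
        have h7 : B^2 ≤ 2184*A*(sb*sd) := by
          have hm2 : A*B ≤ A*(sb*sd) := mul_le_mul_of_nonneg_left h6 hA0
          linarith [hBD, hm2]
        have hsBpos : 0 < sb := by rw [hsb]; exact Real.sqrt_pos.mpr hBpos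
        have h8 : B*sb ≤ 2184*A*sd := by
          have h9 : (B*sb)*sb ≤ (2184*A*sd)*sb := by
            calc (B*sb)*sb = B^2 := by rw [← hsb2]; ring
              _ ≤ 2184*A*(sb*sd) := h7
              _ = (2184*A*sd)*sb := by ring
          exact le_of_mul_le_mul_right h9 hsBpos
        have hAsa : 0 ≤ A*sa := by positivity
        have hAsd2 : 0 ≤ A*sd := by positivity
        linarith [h8, hAsa, hAsd2]
  -- Step 4: pointwise sup bound and L⁸ integral
  have hE2 : E ≤ sa*sb := by
    have hcs := gn_cs (a := (0:ℝ)) (b := 1) (by norm_num) hcv.abs hc1.abs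
    simp only [sq_abs] at hcs
    have he : (∫ x in (0:ℝ)..1, |v x| * |deriv v x|) = E := by
      rw [hEdef]; congr 1; funext x; rw [abs_mul]
    rw [he, ← hA, ← hB] at hcs
    have h1' : E = Real.sqrt (E^2) := by rw [Real.sqrt_sq hE0]
    rw [h1', hsa, hsb, ← Real.sqrt_mul hA0]
    exact Real.sqrt_le_sqrt hcs
  have hpt : ∀ x ∈ Icc (0:ℝ) 1, (v x)^2 ≤ A + 2*E := by
    intro x hx
    have := gn_pt hd0 hc1 (t := 0) (h := 1) one_pos
      (by rw [zero_add]; exact hx)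
    simp only [zero_add] at this
    rw [← hA, ← hEdef] at this
    linarith [this]
  have hint8 : V8 ≤ (A + 2*E)^3 * A := by
    have hmono : V8 ≤ ∫ x in (0:ℝ)..1, (A + 2*E)^3 * (v x)^2 := by
      apply intervalIntegral.integral_mono_on (by norm_num)
        ((hcv.pow 8).intervalIntegrable _ _)
        ((continuous_const.mul (hcv.pow 2)).intervalIntegrable _ _)
      intro x hx
      have h1' := hpt x hx
      show (v x)^8 ≤ (A + 2*E)^3 * (v x)^2
      have h2' : (v x)^8 = ((v x)^2)^3 * (v x)^2 := by ring
      rw [h2']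
      have h3' : ((v x)^2)^3 ≤ (A + 2*E)^3 :=
        pow_le_pow_left₀ (sq_nonneg _) h1' 3
      exact mul_le_mul_of_nonneg_right h3' (sq_nonneg _)
    rwa [intervalIntegral.integral_const_mul, ← hA] at hmono
  -- Step 5: combine everything polynomially
  have hcube : (A + 2*E)^3 ≤ 4*A^3 + 32*(A*sa)*(B*sb) := by
    have step1 : A + 2*E ≤ A + 2*(sa*sb) := by linarith [hE2]
    have step2 : (A + 2*E)^3 ≤ (A + 2*(sa*sb))^3 :=
      pow_le_pow_left₀ (by positivity) step1 3
    have step3 : (A + 2*(sa*sb))^3 ≤ 4*A^3 + 4*(2*(sa*sb))^3 := by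
      nlinarith [mul_nonneg (add_nonneg hA0 (by positivity : (0:ℝ) ≤ 2*(sa*sb)))
        (sq_nonneg (A - 2*(sa*sb))), hA0, mul_nonneg hsa0 hsb0]
    have step4 : (2*(sa*sb))^3 = 8*(A*sa)*(B*sb) := by
      linear_combination (8*sa*sb*sb^2)*hsa2 + (8*sa*sb*A)*hsb2
    linarith [step2, step3, step4.le, step4.ge]
  have hfinal : V8 ≤ 3284740*(A^4 + A^3*(sa*sd)) := by
    have hAsa0 : 0 ≤ A*sa := by positivity
    have t5 : 32*((A*sa)*(B*sb)) ≤ 32*((A*sa)*(102648*(A*sa + A*sd))) := by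
      have := mul_le_mul_of_nonneg_left hB32 hAsa0
      linarith [mul_le_mul_of_nonneg_left this (by norm_num : (0:ℝ) ≤ 32)]
    have e : 32*((A*sa)*(102648*(A*sa + A*sd))) = 3284736*(A^3 + A^2*(sa*sd)) := by
      linear_combination (3284736*A^2)*hsa2
    have hpos : 0 ≤ A^2*(sa*sd) := by positivity
    have hpoly : 4*A^3 + 32*(A*sa)*(B*sb) ≤ 3284740*(A^3 + A^2*(sa*sd)) := by
      have t5' : 32*(A*sa)*(B*sb) ≤ 3284736*(A^3 + A^2*(sa*sd)) := by
        calc 32*(A*sa)*(B*sb) = 32*((A*sa)*(B*sb)) := by ring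
          _ ≤ 32*((A*sa)*(102648*(A*sa + A*sd))) := t5
          _ = 3284736*(A^3 + A^2*(sa*sd)) := e
      nlinarith [t5', hA0, hpos, pow_nonneg hA0 3]
    have hstep : V8 ≤ (4*A^3 + 32*(A*sa)*(B*sb))*A := by
      calc V8 ≤ (A + 2*E)^3 * A := hint8
        _ ≤ (4*A^3 + 32*(A*sa)*(B*sb))*A := mul_le_mul_of_nonneg_right hcube hA0
    have hmul := mul_le_mul_of_nonneg_right hpoly hA0
    have e2 : (3284740*(A^3 + A^2*(sa*sd)))*A = 3284740*(A^4 + A^3*(sa*sd)) := by ring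
    linarith [hstep, hmul, e2.le, e2.ge]
  -- Step 6: take eighth roots
  have hX0 : 0 ≤ A^4 + A^3*(sa*sd) := by positivity
  have hX80 : 0 ≤ (A^4 + A^3*(sa*sd))^((1:ℝ)/8) := Real.rpow_nonneg hX0 _
  have r1 : V8 ^ ((1:ℝ)/8) ≤ (3284740*(A^4 + A^3*(sa*sd)))^((1:ℝ)/8) :=
    Real.rpow_le_rpow hV80 hfinal (by norm_num)
  have r2 : (3284740*(A^4 + A^3*(sa*sd)))^((1:ℝ)/8)
      = (3284740:ℝ)^((1:ℝ)/8) * (A^4 + A^3*(sa*sd))^((1:ℝ)/8) :=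
    Real.mul_rpow (by norm_num) hX0
  have r3 : (3284740:ℝ)^((1:ℝ)/8) ≤ 100 := by
    have h100 : ((100:ℝ)^(8:ℕ))^((1:ℝ)/8) = 100 := by
      rw [← Real.rpow_natCast (100:ℝ) 8, ← Real.rpow_mul (by norm_num)]
      norm_num
    calc (3284740:ℝ)^((1:ℝ)/8) ≤ ((100:ℝ)^(8:ℕ))^((1:ℝ)/8) :=
        Real.rpow_le_rpow (by norm_num) (by norm_num) (by norm_num)
      _ = 100 := h100
  have r4 : (A^4 + A^3*(sa*sd))^((1:ℝ)/8)
      ≤ (A^4)^((1:ℝ)/8) + (A^3*(sa*sd))^((1:ℝ)/8) :=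
    gn_rpow_add (by positivity) (by positivity)
  have r5 : ((A^4:ℝ))^((1:ℝ)/8) = A^((1:ℝ)/2) := by
    rw [← Real.rpow_natCast A 4, ← Real.rpow_mul hA0]; norm_num
  have r6 : (A^3*(sa*sd))^((1:ℝ)/8) = A^((7:ℝ)/16) * D^((1:ℝ)/16) := by
    rw [hsa, hsd, Real.sqrt_eq_rpow, Real.sqrt_eq_rpow]
    have e1 : (A^3:ℝ)*(A^((1:ℝ)/2)*D^((1:ℝ)/2)) = A^((7:ℝ)/2)*D^((1:ℝ)/2) := by
      rw [← Real.rpow_natCast A 3, ← mul_assoc,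
        ← Real.rpow_add' hA0 (by norm_num)]
      norm_num
    rw [e1, Real.mul_rpow (by positivity) (by positivity),
      ← Real.rpow_mul hA0, ← Real.rpow_mul hD0]
    norm_num
  calc V8 ^ ((1:ℝ)/8)
      ≤ 100 * ((A^4)^((1:ℝ)/8) + (A^3*(sa*sd))^((1:ℝ)/8)) := by
        have s1 : V8^((1:ℝ)/8)
            ≤ (3284740:ℝ)^((1:ℝ)/8) * (A^4 + A^3*(sa*sd))^((1:ℝ)/8) := by
          rw [← r2]; exact r1
        have s2 : (3284740:ℝ)^((1:ℝ)/8) * (A^4 + A^3*(sa*sd))^((1:ℝ)/8)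
            ≤ 100 * (A^4 + A^3*(sa*sd))^((1:ℝ)/8) :=
          mul_le_mul_of_nonneg_right r3 hX80
        have s3 : 100 * (A^4 + A^3*(sa*sd))^((1:ℝ)/8)
            ≤ 100 * ((A^4)^((1:ℝ)/8) + (A^3*(sa*sd))^((1:ℝ)/8)) := by linarith [r4]
        linarith
    _ = 100 * (D^((1:ℝ)/16) * A^((7:ℝ)/16) + A^((1:ℝ)/2)) := by rw [r5, r6]; ring
end
end

section
/- There exists a constant C > 0 such that for every function v : [0,1] → ℝ that is three times continuously differentiable with v(0) = v(1) = 0, one has (∫₀¹ |v'(x)|⁴ dx)^{1/4} ≤ C[ (∫₀¹ |v'''(x)|² dx)^{5/24} · (∫₀¹ |v(x)|² dx)^{7/24} + (∫₀¹ |v(x)|² dx)^{1/2} ]. -/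
set_option maxHeartbeats 1000000

open Set MeasureTheory intervalIntegral

noncomputable section

namespace GNaux

lemma cs {f g : ℝ → ℝ} {a b : ℝ} (hab : a ≤ b) (hf : Continuous f) (hg : Continuous g) :
    ∫ x in a..b, f x * g x
      ≤ Real.sqrt (∫ x in a..b, f x ^ 2) * Real.sqrt (∫ x in a..b, g x ^ 2) := by
  set A := ∫ x in a..b, f x ^ 2 with hAdef
  set B := ∫ x in a..b, f x * g x with hBdef
  set C := ∫ x in a..b, g x ^ 2 with hCdef
  have hA0 : 0 ≤ A := intervalIntegral.integral_nonneg hab (fun x _ => sq_nonneg _)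
  have key : B ^ 2 ≤ A * C := by
    have h : ∀ t : ℝ, 0 ≤ A * (t * t) + (2 * B) * t + C := by
      intro t
      have hint : (∫ x in a..b, (t * f x + g x) ^ 2) = A * (t * t) + (2 * B) * t + C := by
        have e : ∀ x, (t * f x + g x) ^ 2
            = t * t * f x ^ 2 + 2 * t * (f x * g x) + g x ^ 2 := by intro x; ring
        simp_rw [e]
        rw [intervalIntegral.integral_add (f := fun x => t * t * f x ^ 2 + 2 * t * (f x * g x)) (g := fun x => g x ^ 2)
              (((continuous_const.mul (hf.pow 2)).add
                (continuous_const.mul (hf.mul hg))).intervalIntegrable a b)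
              ((hg.pow 2).intervalIntegrable a b),
            intervalIntegral.integral_add (f := fun x => t * t * f x ^ 2) (g := fun x => 2 * t * (f x * g x))
              ((continuous_const.mul (hf.pow 2)).intervalIntegrable a b)
              ((continuous_const.mul (hf.mul hg)).intervalIntegrable a b),
            intervalIntegral.integral_const_mul, intervalIntegral.integral_const_mul]
        rw [← hAdef, ← hBdef, ← hCdef]; ring
      have h0 : 0 ≤ ∫ x in a..b, (t * f x + g x) ^ 2 :=
        intervalIntegral.integral_nonneg hab (fun x _ => sq_nonneg _)
      linarith [hint ▸ h0]
    have hd := discrim_le_zero h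
    rw [discrim] at hd
    nlinarith [hd]
  calc B ≤ |B| := le_abs_self _
    _ = Real.sqrt (B ^ 2) := (Real.sqrt_sq_eq_abs B).symm
    _ ≤ Real.sqrt (A * C) := Real.sqrt_le_sqrt key
    _ = Real.sqrt A * Real.sqrt C := Real.sqrt_mul hA0 C

end GNaux

namespace GNaux

lemma exists_abs_le_average {f : ℝ → ℝ} (hf : Continuous f) {a b : ℝ} (hab : a < b) :
    ∃ c ∈ Icc a b, |f c| * (b - a) ≤ ∫ x in a..b, |f x| := by
  obtain ⟨c, hc, hmin⟩ :=
    isCompact_Icc.exists_isMinOn (nonempty_Icc.2 hab.le) hf.abs.continuousOn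
  refine ⟨c, hc, ?_⟩
  have h : ∫ x in a..b, |f c| ≤ ∫ x in a..b, |f x| :=
    intervalIntegral.integral_mono_on hab.le intervalIntegrable_const
      (hf.abs.intervalIntegrable a b) (fun x hx => hmin hx)
  simpa [intervalIntegral.integral_const, smul_eq_mul, mul_comm] using h

lemma abs_le_of_hasDeriv {f f' : ℝ → ℝ} (hf' : Continuous f')
    (hder : ∀ x, HasDerivAt f (f' x) x) {a b c x : ℝ}
    (hc : c ∈ Icc a b) (hx : x ∈ Icc a b) :
    |f x| ≤ |f c| + ∫ t in a..b, |f' t| := by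
  have heq : ∫ t in c..x, f' t = f x - f c :=
    intervalIntegral.integral_eq_sub_of_hasDerivAt (fun t _ => hder t)
      (hf'.intervalIntegrable c x)
  have h2 : |∫ t in c..x, f' t| ≤ ∫ t in a..b, |f' t| := by
    have hmono : ∀ u w : ℝ, u ≤ w → u ∈ Icc a b → w ∈ Icc a b →
        |∫ t in u..w, f' t| ≤ ∫ t in a..b, |f' t| := by
      intro u w huw hu hw
      calc |∫ t in u..w, f' t| ≤ ∫ t in u..w, |f' t| := by
            simpa [Real.norm_eq_abs] using
              intervalIntegral.norm_integral_le_integral_norm (f := f') (μ := volume) huw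
        _ ≤ ∫ t in a..b, |f' t| :=
            intervalIntegral.integral_mono_interval hu.1 huw hw.2
              (Filter.Eventually.of_forall (fun t => abs_nonneg _))
              (hf'.abs.intervalIntegrable a b)
    rcases le_total c x with h | h
    · exact hmono c x h hc hx
    · rw [intervalIntegral.integral_symm, abs_neg]
      exact hmono x c h hx hc
  calc |f x| = |f c + (f x - f c)| := by ring_nf
    _ ≤ |f c| + |f x - f c| := abs_add_le _ _
    _ ≤ |f c| + ∫ t in a..b, |f' t| := by rw [← heq]; linarith [h2]

end GNaux

namespace GNaux

lemma sq_integral_abs_le {f : ℝ → ℝ} (hf : Continuous f) {a b : ℝ} (hab : a ≤ b) :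
    (∫ x in a..b, |f x|) ^ 2 ≤ (b - a) * ∫ x in a..b, f x ^ 2 := by
  have h1 := cs (f := fun x => |f x|) (g := fun _ => (1:ℝ)) hab hf.abs continuous_const
  simp_rw [mul_one, sq_abs, one_pow] at h1
  rw [intervalIntegral.integral_const, smul_eq_mul, mul_one] at h1
  have h0 : 0 ≤ ∫ x in a..b, |f x| :=
    intervalIntegral.integral_nonneg hab (fun x _ => abs_nonneg _)
  have hA : 0 ≤ ∫ x in a..b, f x ^ 2 :=
    intervalIntegral.integral_nonneg hab (fun x _ => sq_nonneg _)
  calc (∫ x in a..b, |f x|) ^ 2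
      ≤ (Real.sqrt (∫ x in a..b, f x ^ 2) * Real.sqrt (b - a)) ^ 2 := by
        exact pow_le_pow_left₀ h0 h1 2
    _ = (∫ x in a..b, f x ^ 2) * (b - a) := by
        rw [mul_pow, Real.sq_sqrt hA, Real.sq_sqrt (by linarith : (0:ℝ) ≤ b - a)]
    _ = (b - a) * ∫ x in a..b, f x ^ 2 := mul_comm _ _

lemma local_interp {f f' f'' : ℝ → ℝ} (hfc : Continuous f) (hf'c : Continuous f')
    (hf''c : Continuous f'')
    (hd1 : ∀ x, HasDerivAt f (f' x) x) (hd2 : ∀ x, HasDerivAt f' (f'' x) x)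
    {a b : ℝ} (hab : a < b) :
    ∫ x in a..b, f' x ^ 2
      ≤ 648 / (b - a) ^ 2 * (∫ x in a..b, f x ^ 2)
        + 2 * (b - a) ^ 2 * ∫ x in a..b, f'' x ^ 2 := by
  set h := b - a with hh
  have hhpos : 0 < h := by simp [hh]; linarith
  set J := ∫ x in a..b, |f x| with hJ
  set K := ∫ x in a..b, |f'' x| with hK
  have hJ0 : 0 ≤ J := intervalIntegral.integral_nonneg hab.le (fun x _ => abs_nonneg _)
  have hK0 : 0 ≤ K := intervalIntegral.integral_nonneg hab.le (fun x _ => abs_nonneg _)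
  -- small value points
  have habs_mono : ∀ u w : ℝ, a ≤ u → u ≤ w → w ≤ b → (∫ x in u..w, |f x|) ≤ J :=
    fun u w hu huw hw => intervalIntegral.integral_mono_interval hu huw hw
      (Filter.Eventually.of_forall (fun t => abs_nonneg _)) (hfc.abs.intervalIntegrable a b)
  obtain ⟨p, hp, hpval⟩ := exists_abs_le_average hfc
    (show a < a + h / 3 by linarith)
  obtain ⟨q, hq, hqval⟩ := exists_abs_le_average hfc
    (show b - h / 3 < b by linarith)
  have hpJ : |f p| * (h / 3) ≤ J := by
    have := habs_mono a (a + h / 3) le_rfl (by linarith) (by simp [hh]; linarith)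
    calc |f p| * (h / 3) = |f p| * (a + h / 3 - a) := by ring_nf
      _ ≤ ∫ x in a..(a + h / 3), |f x| := hpval
      _ ≤ J := this
  have hqJ : |f q| * (h / 3) ≤ J := by
    have := habs_mono (b - h / 3) b (by simp [hh]; linarith) (by linarith) le_rfl
    calc |f q| * (h / 3) = |f q| * (b - (b - h / 3)) := by ring_nf
      _ ≤ ∫ x in (b - h / 3)..b, |f x| := hqval
      _ ≤ J := this
  have hpq : p < q := by
    have h1 : p ≤ a + h / 3 := hp.2
    have h2 : b - h / 3 ≤ q := hq.1
    have : a + h / 3 < b - h / 3 := by simp only [hh] at *; linarith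
    linarith
  -- mean value point
  obtain ⟨c, hc, hcval⟩ := exists_hasDerivAt_eq_slope f f' hpq
    (hfc.continuousOn) (fun x _ => hd1 x)
  have hcIcc : c ∈ Icc a b := by
    constructor
    · have := hc.1; have := hp.1; linarith
    · have := hc.2; have := hq.2; linarith
  have hqp3 : h / 3 ≤ q - p := by
    have h1 : p ≤ a + h / 3 := hp.2
    have h2 : b - h / 3 ≤ q := hq.1
    simp only [hh] at *; linarith
  have hfc_bound : |f' c| ≤ 18 * J / h ^ 2 := by
    rw [hcval]
    rw [abs_div]
    rw [abs_of_pos (by linarith : (0:ℝ) < q - p)]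
    rw [div_le_div_iff₀ (by linarith) (by positivity)]
    have habs : |f q - f p| ≤ |f q| + |f p| := abs_sub _ _
    have h1 : |f p| ≤ 3 * J / h := by
      rw [le_div_iff₀ hhpos] at *
      calc |f p| * h = (|f p| * (h/3)) * 3 := by ring
        _ ≤ J * 3 := by linarith
        _ = 3 * J := by ring
    have h2 : |f q| ≤ 3 * J / h := by
      calc |f q| = (|f q| * (h/3)) * (3/h) := by field_simp
        _ ≤ J * (3/h) := by
            apply mul_le_mul_of_nonneg_right hqJ (by positivity)
        _ = 3 * J / h := by ring
    have h1' : |f p| ≤ 3 * J / h := by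
      calc |f p| = (|f p| * (h/3)) * (3/h) := by field_simp
        _ ≤ J * (3/h) := mul_le_mul_of_nonneg_right hpJ (by positivity)
        _ = 3 * J / h := by ring
    calc |f q - f p| * h ^ 2 ≤ (3 * J / h + 3 * J / h) * h ^ 2 := by nlinarith [abs_nonneg (f q - f p), sq_nonneg h]
      _ = 6 * J * h := by field_simp; ring
      _ ≤ 18 * J * (q - p) := by nlinarith
  -- pointwise bound for f'
  have hpt : ∀ x ∈ Icc a b, f' x ^ 2 ≤ 2 * (18 * J / h ^ 2) ^ 2 + 2 * K ^ 2 := by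
    intro x hx
    have hb := abs_le_of_hasDeriv hf''c hd2 hcIcc hx
    have : |f' x| ≤ 18 * J / h ^ 2 + K := by rw [hK]; linarith
    calc f' x ^ 2 = |f' x| ^ 2 := (sq_abs _).symm
      _ ≤ (18 * J / h ^ 2 + K) ^ 2 := by
          apply pow_le_pow_left₀ (abs_nonneg _) this
      _ ≤ 2 * (18 * J / h ^ 2) ^ 2 + 2 * K ^ 2 := by nlinarith [sq_nonneg (18 * J / h ^ 2 - K)]
  have hint : ∫ x in a..b, f' x ^ 2 ≤ h * (2 * (18 * J / h ^ 2) ^ 2 + 2 * K ^ 2) := by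
    have := intervalIntegral.integral_mono_on hab.le
      ((hf'c.pow 2).intervalIntegrable a b)
      (_root_.intervalIntegrable_const (μ := volume) (c := 2 * (18 * J / h ^ 2) ^ 2 + 2 * K ^ 2)) hpt
    rwa [intervalIntegral.integral_const, smul_eq_mul, ← hh] at this
  have hJsq : J ^ 2 ≤ h * ∫ x in a..b, f x ^ 2 := sq_integral_abs_le hfc hab.le
  have hKsq : K ^ 2 ≤ h * ∫ x in a..b, f'' x ^ 2 := sq_integral_abs_le hf''c hab.le
  have hIf : 0 ≤ ∫ x in a..b, f x ^ 2 :=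
    intervalIntegral.integral_nonneg hab.le (fun x _ => sq_nonneg _)
  calc ∫ x in a..b, f' x ^ 2 ≤ h * (2 * (18 * J / h ^ 2) ^ 2 + 2 * K ^ 2) := hint
    _ = 648 * J ^ 2 / h ^ 3 + 2 * h * K ^ 2 := by field_simp; ring
    _ ≤ 648 * (h * ∫ x in a..b, f x ^ 2) / h ^ 3
        + 2 * h * (h * ∫ x in a..b, f'' x ^ 2) := by
        have h3 : (0:ℝ) < h ^ 3 := by positivity
        gcongr
    _ = 648 / h ^ 2 * (∫ x in a..b, f x ^ 2) + 2 * h ^ 2 * ∫ x in a..b, f'' x ^ 2 := by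
        field_simp

end GNaux

namespace GNaux

lemma partition_interp {f f' f'' : ℝ → ℝ} (hfc : Continuous f) (hf'c : Continuous f')
    (hf''c : Continuous f'') (hd1 : ∀ x, HasDerivAt f (f' x) x)
    (hd2 : ∀ x, HasDerivAt f' (f'' x) x) {n : ℕ} (hn : 0 < n) :
    ∫ x in (0:ℝ)..1, f' x ^ 2
      ≤ 648 * n ^ 2 * (∫ x in (0:ℝ)..1, f x ^ 2)
        + 2 / n ^ 2 * ∫ x in (0:ℝ)..1, f'' x ^ 2 := by
  have hn0 : ((n:ℝ)) ≠ 0 := Nat.cast_ne_zero.2 hn.ne'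
  have hnpos : (0:ℝ) < n := Nat.cast_pos.2 hn
  have key : ∀ g : ℝ → ℝ, Continuous g →
      ∑ k ∈ Finset.range n, ∫ x in ((k:ℝ)/n)..(((k:ℝ)+1)/n), g x
        = ∫ x in (0:ℝ)..1, g x := by
    intro g hg
    have := intervalIntegral.sum_integral_adjacent_intervals
      (a := fun k : ℕ => (k:ℝ)/n) (f := g) (μ := volume) (n := n)
      (fun k _ => hg.intervalIntegrable _ _)
    simp only [Nat.cast_zero, zero_div, Nat.cast_add, Nat.cast_one] at this
    rw [div_self hn0] at this
    exact this
  have hper : ∀ k : ℕ,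
      ∫ x in ((k:ℝ)/n)..(((k:ℝ)+1)/n), f' x ^ 2
        ≤ 648 * n ^ 2 * (∫ x in ((k:ℝ)/n)..(((k:ℝ)+1)/n), f x ^ 2)
          + 2 / n ^ 2 * ∫ x in ((k:ℝ)/n)..(((k:ℝ)+1)/n), f'' x ^ 2 := by
    intro k
    have hab : (k:ℝ)/n < ((k:ℝ)+1)/n := by
      rw [div_lt_div_iff₀ hnpos hnpos]
      nlinarith
    have hdiff : ((k:ℝ)+1)/n - (k:ℝ)/n = 1/n := by
      rw [div_sub_div_same]; ring_nf
    have := local_interp hfc hf'c hf''c hd1 hd2 hab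
    rw [hdiff] at this
    have e2 : 648 / (1/(n:ℝ)) ^ 2 = 648 * n ^ 2 := by field_simp
    have e3 : 2 * (1/(n:ℝ)) ^ 2 = 2 / n ^ 2 := by field_simp
    rw [e2, e3] at this
    exact this
  rw [← key (fun x => f' x ^ 2) (hf'c.pow 2), ← key (fun x => f x ^ 2) (hfc.pow 2), ← key (fun x => f'' x ^ 2) (hf''c.pow 2)]
  calc ∑ k ∈ Finset.range n, ∫ x in ((k:ℝ)/n)..(((k:ℝ)+1)/n), f' x ^ 2
      ≤ ∑ k ∈ Finset.range n,
          (648 * n ^ 2 * (∫ x in ((k:ℝ)/n)..(((k:ℝ)+1)/n), f x ^ 2)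
            + 2 / n ^ 2 * ∫ x in ((k:ℝ)/n)..(((k:ℝ)+1)/n), f'' x ^ 2) :=
        Finset.sum_le_sum (fun k _ => hper k)
    _ = 648 * n ^ 2 * (∑ k ∈ Finset.range n, ∫ x in ((k:ℝ)/n)..(((k:ℝ)+1)/n), f x ^ 2)
        + 2 / n ^ 2 * ∑ k ∈ Finset.range n, ∫ x in ((k:ℝ)/n)..(((k:ℝ)+1)/n), f'' x ^ 2 := by
        rw [Finset.sum_add_distrib, ← Finset.mul_sum, ← Finset.mul_sum]

lemma opt {X Y Z : ℝ} (hY : 0 < Y) (hZ : 0 ≤ Z)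
    (h : ∀ n : ℕ, 0 < n → X ≤ 648 * n ^ 2 * Y + 2 / n ^ 2 * Z) :
    X ≤ 2594 * (Real.sqrt (Y * Z) + Y) := by
  have hsq : 0 ≤ Real.sqrt (Y * Z) := Real.sqrt_nonneg _
  rcases le_total Z Y with hZY | hYZ
  · have h1 := h 1 one_pos
    have : X ≤ 648 * Y + 2 * Z := by push_cast at h1; linarith
    linarith
  · -- Y ≤ Z
    have hZpos : 0 < Z := lt_of_lt_of_le hY hYZ
    set s := Real.sqrt (Z / Y) with hs
    have hspos : 0 < s := Real.sqrt_pos.2 (by positivity)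
    have hs1 : 1 ≤ s := by
      rw [hs]
      rw [show (1:ℝ) = Real.sqrt 1 by simp]
      apply Real.sqrt_le_sqrt
      rw [le_div_iff₀ hY]; linarith
    set r := Real.sqrt s with hr
    have hrpos : 0 < r := Real.sqrt_pos.2 hspos
    have hr1 : 1 ≤ r := by
      rw [hr, show (1:ℝ) = Real.sqrt 1 by simp]
      exact Real.sqrt_le_sqrt hs1
    have hr2 : r ^ 2 = s := Real.sq_sqrt hspos.le
    set n := ⌈r⌉₊ with hn
    have hnpos : 0 < n := Nat.ceil_pos.2 hrpos
    have hnr : r ≤ (n:ℝ) := Nat.le_ceil r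
    have hnr2 : (n:ℝ) ≤ 2 * r := by
      have := Nat.ceil_lt_add_one hrpos.le
      linarith
    have hkey := h n hnpos
    -- bound the two terms
    have hsY : s * Y = Real.sqrt (Y * Z) := by
      rw [hs]
      rw [show Y = Real.sqrt (Y ^ 2) by rw [Real.sqrt_sq hY.le]]
      rw [← Real.sqrt_mul (by positivity) _]
      congr 1
      field_simp
      ring
      rw [Real.sqrt_sq hY.le]
    have ht1 : 648 * (n:ℝ) ^ 2 * Y ≤ 2592 * Real.sqrt (Y * Z) := by
      have hn2 : (n:ℝ) ^ 2 ≤ 4 * s := by nlinarith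
      nlinarith [hsq]
    have ht2 : 2 / (n:ℝ) ^ 2 * Z ≤ 2 * Real.sqrt (Y * Z) := by
      have hn2 : s ≤ (n:ℝ) ^ 2 := by nlinarith
      have h1 : Z / (n:ℝ) ^ 2 ≤ Z / s := by
        apply div_le_div_of_nonneg_left hZ hspos hn2
      have h2 : Z / s = Real.sqrt (Y * Z) := by
        have hs2 : s ^ 2 = Z / Y := Real.sq_sqrt (by positivity)
        rw [eq_div_iff hY.ne'] at hs2
        rw [div_eq_iff hspos.ne', ← hsY]
        linear_combination -hs2
      calc 2 / (n:ℝ) ^ 2 * Z = 2 * (Z / (n:ℝ) ^ 2) := by ring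
        _ ≤ 2 * (Z / s) := by linarith
        _ = 2 * Real.sqrt (Y * Z) := by rw [h2]
    calc X ≤ 648 * (n:ℝ) ^ 2 * Y + 2 / (n:ℝ) ^ 2 * Z := hkey
      _ ≤ 2592 * Real.sqrt (Y * Z) + 2 * Real.sqrt (Y * Z) := by linarith
      _ ≤ 2594 * (Real.sqrt (Y * Z) + Y) := by nlinarith [hsq, hY.le]

end GNaux

namespace GNaux

lemma sqrt_add_le' {x y : ℝ} (hx : 0 ≤ x) (hy : 0 ≤ y) :
    Real.sqrt (x + y) ≤ Real.sqrt x + Real.sqrt y := by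
  have h : x + y ≤ (Real.sqrt x + Real.sqrt y) ^ 2 := by
    nlinarith [Real.sq_sqrt hx, Real.sq_sqrt hy,
      mul_nonneg (Real.sqrt_nonneg x) (Real.sqrt_nonneg y)]
  calc Real.sqrt (x + y) ≤ Real.sqrt ((Real.sqrt x + Real.sqrt y) ^ 2) := Real.sqrt_le_sqrt h
    _ = Real.sqrt x + Real.sqrt y := Real.sqrt_sq (by positivity)

lemma le_of_sq_le_mul {q R : ℝ} (hq : 0 ≤ q) (hR : 0 ≤ R) (h : q ^ 2 ≤ R * q) : q ≤ R := by
  rcases eq_or_lt_of_le hq with h0 | h0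
  · rw [← h0]; exact hR
  · exact le_of_mul_le_mul_right (by nlinarith) h0

lemma young_quarter {u Y : ℝ} (hu : 0 ≤ u) (hY : 0 ≤ Y) :
    51 * (u ^ ((1:ℝ)/4) * Y) ≤ u / 4 + 153 * Y ^ ((4:ℝ)/3) := by
  have hp2 : (0:ℝ) ≤ 204 * Y ^ ((4:ℝ)/3) := by positivity
  have hg := Real.geom_mean_le_arith_mean2_weighted (by norm_num : (0:ℝ) ≤ 1/4)
    (by norm_num : (0:ℝ) ≤ 3/4) hu hp2 (by norm_num)
  have he : (204 * Y ^ ((4:ℝ)/3)) ^ ((3:ℝ)/4) = (204:ℝ) ^ ((3:ℝ)/4) * Y := by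
    rw [Real.mul_rpow (by norm_num) (by positivity), ← Real.rpow_mul hY]
    norm_num
  have hc : (51:ℝ) ≤ (204:ℝ) ^ ((3:ℝ)/4) := by
    have h1 : (((51:ℝ) ^ (4:ℕ)) : ℝ) ^ ((1:ℝ)/4) ≤ (((204:ℝ) ^ (3:ℕ)) : ℝ) ^ ((1:ℝ)/4) :=
      Real.rpow_le_rpow (by positivity) (by norm_num) (by norm_num)
    rw [← Real.rpow_natCast (51:ℝ) 4, ← Real.rpow_natCast (204:ℝ) 3,
        ← Real.rpow_mul (by norm_num), ← Real.rpow_mul (by norm_num)] at h1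
    norm_num at h1
    exact h1
  rw [he] at hg
  calc 51 * (u ^ ((1:ℝ)/4) * Y) ≤ (204:ℝ) ^ ((3:ℝ)/4) * (u ^ ((1:ℝ)/4) * Y) := by
        apply mul_le_mul_of_nonneg_right hc
        positivity
    _ = u ^ ((1:ℝ)/4) * ((204:ℝ) ^ ((3:ℝ)/4) * Y) := by ring
    _ ≤ 1/4 * u + 3/4 * (204 * Y ^ ((4:ℝ)/3)) := hg
    _ = u / 4 + 153 * Y ^ ((4:ℝ)/3) := by ring

lemma rpow54_add {x y : ℝ} (hx : 0 ≤ x) (hy : 0 ≤ y) :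
    (x + y) ^ ((5:ℝ)/4) ≤ 4 * (x ^ ((5:ℝ)/4) + y ^ ((5:ℝ)/4)) := by
  have h2 : ((2:ℝ)) ^ ((5:ℝ)/4) ≤ 4 := by
    have := Real.rpow_le_rpow_of_exponent_le (x := (2:ℝ)) one_le_two
      (by norm_num : (5:ℝ)/4 ≤ (2:ℕ))
    rw [Real.rpow_natCast] at this
    norm_num at this
    exact this
  rcases le_total x y with h | h
  · calc (x + y) ^ ((5:ℝ)/4) ≤ (2 * y) ^ ((5:ℝ)/4) :=
          Real.rpow_le_rpow (by linarith) (by linarith) (by norm_num)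
      _ = (2:ℝ) ^ ((5:ℝ)/4) * y ^ ((5:ℝ)/4) := Real.mul_rpow (by norm_num) hy
      _ ≤ 4 * y ^ ((5:ℝ)/4) := by
          apply mul_le_mul_of_nonneg_right h2 (Real.rpow_nonneg hy _)
      _ ≤ 4 * (x ^ ((5:ℝ)/4) + y ^ ((5:ℝ)/4)) := by
          have := Real.rpow_nonneg hx ((5:ℝ)/4); linarith
  · calc (x + y) ^ ((5:ℝ)/4) ≤ (2 * x) ^ ((5:ℝ)/4) :=
          Real.rpow_le_rpow (by linarith) (by linarith) (by norm_num)
      _ = (2:ℝ) ^ ((5:ℝ)/4) * x ^ ((5:ℝ)/4) := Real.mul_rpow (by norm_num) hx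
      _ ≤ 4 * x ^ ((5:ℝ)/4) := by
          apply mul_le_mul_of_nonneg_right h2 (Real.rpow_nonneg hx _)
      _ ≤ 4 * (x ^ ((5:ℝ)/4) + y ^ ((5:ℝ)/4)) := by
          have := Real.rpow_nonneg hy ((5:ℝ)/4); linarith

end GNaux


namespace GNaux

lemma final_arith {N0 N1 N2 N3 Q : ℝ} (h0 : 0 ≤ N0) (hn1 : 0 ≤ N1) (h2n : 0 ≤ N2)
    (h3n : 0 ≤ N3) (hQ : 0 ≤ Q)
    (hA : Q ≤ 3 * Real.sqrt (2 * N0 * N1) * Real.sqrt Q * N2)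
    (hB : N1 ^ 2 ≤ N0 * N2)
    (hC : 0 < N1 → N2 ^ 2 ≤ 2594 * (N1 * N3 + N1 ^ 2)) :
    Q ^ ((1:ℝ)/4) ≤ 100000 * (N3 ^ ((5:ℝ)/12) * N0 ^ ((7:ℝ)/12) + N0) := by
  have hRHS : 0 ≤ 100000 * (N3 ^ ((5:ℝ)/12) * N0 ^ ((7:ℝ)/12) + N0) := by positivity
  rcases eq_or_lt_of_le hn1 with hN1z | hN1
  · -- N1 = 0 : then Q = 0
    have hz : Real.sqrt (2 * N0 * N1) = 0 := by rw [← hN1z]; simp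
    have hQ0 : Q = 0 := le_antisymm (by rw [hz] at hA; simpa using hA) hQ
    rw [hQ0, Real.zero_rpow (by norm_num)]
    exact hRHS
  -- main case
  set q := Real.sqrt Q with hqdef
  have hq0 : 0 ≤ q := Real.sqrt_nonneg _
  have hq2 : q ^ 2 = Q := Real.sq_sqrt hQ
  have step1 : q ≤ 3 * Real.sqrt (2 * N0 * N1) * N2 := by
    apply le_of_sq_le_mul hq0 (by positivity)
    rw [hq2]
    calc Q ≤ 3 * Real.sqrt (2 * N0 * N1) * Real.sqrt Q * N2 := hA
      _ = 3 * Real.sqrt (2 * N0 * N1) * N2 * q := by rw [hqdef]; ring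
  have hs2 : Real.sqrt (2 * N0 * N1)
      = (2:ℝ) ^ ((1:ℝ)/2) * (N0 ^ ((1:ℝ)/2) * N1 ^ ((1:ℝ)/2)) := by
    rw [Real.sqrt_mul (by positivity), Real.sqrt_mul (by norm_num), Real.sqrt_eq_rpow,
      Real.sqrt_eq_rpow, Real.sqrt_eq_rpow]
    ring
  have w1 : N1 ≤ N0 ^ ((1:ℝ)/2) * N2 ^ ((1:ℝ)/2) := by
    calc N1 = Real.sqrt (N1 ^ 2) := (Real.sqrt_sq hn1).symm
      _ ≤ Real.sqrt (N0 * N2) := Real.sqrt_le_sqrt hB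
      _ = N0 ^ ((1:ℝ)/2) * N2 ^ ((1:ℝ)/2) := by
          rw [Real.sqrt_mul h0, Real.sqrt_eq_rpow, Real.sqrt_eq_rpow]
  have w2 : N1 ^ ((1:ℝ)/2) ≤ N0 ^ ((1:ℝ)/4) * N2 ^ ((1:ℝ)/4) := by
    calc N1 ^ ((1:ℝ)/2) ≤ (N0 ^ ((1:ℝ)/2) * N2 ^ ((1:ℝ)/2)) ^ ((1:ℝ)/2) :=
        Real.rpow_le_rpow hn1 w1 (by norm_num)
      _ = N0 ^ ((1:ℝ)/4) * N2 ^ ((1:ℝ)/4) := by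
          rw [Real.mul_rpow (Real.rpow_nonneg h0 _) (Real.rpow_nonneg h2n _),
            ← Real.rpow_mul h0, ← Real.rpow_mul h2n]
          norm_num
  -- N2 interpolation with absorption
  set T := N0 ^ ((1:ℝ)/3) * N3 ^ ((2:ℝ)/3) with hT
  have hT0 : 0 ≤ T := by positivity
  have stepN2 : N2 ≤ 5202 * (T + N0) := by
    have hCC := hC hN1
    have t1 : N2 ≤ Real.sqrt 2594 * Real.sqrt (N1 * N3 + N1 ^ 2) := by
      calc N2 = Real.sqrt (N2 ^ 2) := (Real.sqrt_sq h2n).symm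
        _ ≤ Real.sqrt (2594 * (N1 * N3 + N1 ^ 2)) := Real.sqrt_le_sqrt hCC
        _ = Real.sqrt 2594 * Real.sqrt (N1 * N3 + N1 ^ 2) :=
            Real.sqrt_mul (by norm_num) _
    have t2 : Real.sqrt (N1 * N3 + N1 ^ 2) ≤ Real.sqrt (N1 * N3) + N1 := by
      have := sqrt_add_le' (mul_nonneg hn1 h3n) (sq_nonneg N1)
      rwa [Real.sqrt_sq hn1] at this
    have t3 : Real.sqrt 2594 ≤ 51 := by
      rw [show (51:ℝ) = Real.sqrt (51 ^ 2) from (Real.sqrt_sq (by norm_num)).symm]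
      exact Real.sqrt_le_sqrt (by norm_num)
    have t4 : N2 ≤ 51 * (Real.sqrt (N1 * N3) + N1) := by
      calc N2 ≤ Real.sqrt 2594 * Real.sqrt (N1 * N3 + N1 ^ 2) := t1
        _ ≤ 51 * (Real.sqrt (N1 * N3) + N1) := by
            apply mul_le_mul t3 t2 (Real.sqrt_nonneg _) (by norm_num)
    have t5 : Real.sqrt (N1 * N3) = N1 ^ ((1:ℝ)/2) * N3 ^ ((1:ℝ)/2) := by
      rw [Real.sqrt_mul hn1, Real.sqrt_eq_rpow, Real.sqrt_eq_rpow]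
    have t6 : N2 ≤ 51 * (N2 ^ ((1:ℝ)/4) * (N0 ^ ((1:ℝ)/4) * N3 ^ ((1:ℝ)/2))
        + N0 ^ ((1:ℝ)/2) * N2 ^ ((1:ℝ)/2)) := by
      calc N2 ≤ 51 * (Real.sqrt (N1 * N3) + N1) := t4
        _ ≤ 51 * (N0 ^ ((1:ℝ)/4) * N2 ^ ((1:ℝ)/4) * N3 ^ ((1:ℝ)/2)
              + N0 ^ ((1:ℝ)/2) * N2 ^ ((1:ℝ)/2)) := by
            rw [t5]
            have hm : N1 ^ ((1:ℝ)/2) * N3 ^ ((1:ℝ)/2)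
                ≤ N0 ^ ((1:ℝ)/4) * N2 ^ ((1:ℝ)/4) * N3 ^ ((1:ℝ)/2) :=
              mul_le_mul_of_nonneg_right w2 (Real.rpow_nonneg h3n _)
            exact mul_le_mul_of_nonneg_left (add_le_add hm w1) (by norm_num)
        _ = 51 * (N2 ^ ((1:ℝ)/4) * (N0 ^ ((1:ℝ)/4) * N3 ^ ((1:ℝ)/2))
              + N0 ^ ((1:ℝ)/2) * N2 ^ ((1:ℝ)/2)) := by ring
    have abs1 : 51 * (N2 ^ ((1:ℝ)/4) * (N0 ^ ((1:ℝ)/4) * N3 ^ ((1:ℝ)/2)))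
        ≤ N2 / 4 + 153 * T := by
      have hY : 0 ≤ N0 ^ ((1:ℝ)/4) * N3 ^ ((1:ℝ)/2) := by positivity
      have := young_quarter h2n hY
      have he : (N0 ^ ((1:ℝ)/4) * N3 ^ ((1:ℝ)/2)) ^ ((4:ℝ)/3) = T := by
        rw [Real.mul_rpow (Real.rpow_nonneg h0 _) (Real.rpow_nonneg h3n _),
          ← Real.rpow_mul h0, ← Real.rpow_mul h3n, hT]
        norm_num
      rw [he] at this
      exact this
    have abs2 : 51 * (N0 ^ ((1:ℝ)/2) * N2 ^ ((1:ℝ)/2)) ≤ N2 / 4 + 2601 * N0 := by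
      have e0 : (N0 ^ ((1:ℝ)/2)) ^ 2 = N0 := by
        rw [← Real.rpow_natCast (N0 ^ ((1:ℝ)/2)) 2, ← Real.rpow_mul h0]; norm_num
      have e2 : (N2 ^ ((1:ℝ)/2)) ^ 2 = N2 := by
        rw [← Real.rpow_natCast (N2 ^ ((1:ℝ)/2)) 2, ← Real.rpow_mul h2n]; norm_num
      nlinarith [sq_nonneg (N2 ^ ((1:ℝ)/2) / 2 - 51 * N0 ^ ((1:ℝ)/2)),
        Real.rpow_nonneg h0 ((1:ℝ)/2), Real.rpow_nonneg h2n ((1:ℝ)/2)]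
    have : N2 ≤ N2 / 2 + 153 * T + 2601 * N0 := by
      calc N2 ≤ 51 * (N2 ^ ((1:ℝ)/4) * (N0 ^ ((1:ℝ)/4) * N3 ^ ((1:ℝ)/2)))
            + 51 * (N0 ^ ((1:ℝ)/2) * N2 ^ ((1:ℝ)/2)) := by linarith [t6]
        _ ≤ N2 / 2 + 153 * T + 2601 * N0 := by linarith [abs1, abs2]
    linarith
  -- step 3 : q ≤ 6 * N0^{3/4} N2^{5/4}
  have eA : N0 ^ ((1:ℝ)/2) * N0 ^ ((1:ℝ)/4) = N0 ^ ((3:ℝ)/4) := by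
    rw [← Real.rpow_add' h0 (by norm_num)]; norm_num
  have eB : N2 ^ ((1:ℝ)/4) * N2 = N2 ^ ((5:ℝ)/4) := by
    have h5 : N2 ^ ((5:ℝ)/4) = N2 ^ ((1:ℝ)/4) * N2 ^ ((1:ℝ)) := by
      rw [← Real.rpow_add' h2n (by norm_num)]; norm_num
    rw [h5, Real.rpow_one]
  have hsqrt2le : (2:ℝ) ^ ((1:ℝ)/2) ≤ 2 := by
    have h := Real.rpow_le_rpow_of_exponent_le (x := (2:ℝ)) one_le_two
      (by norm_num : (1:ℝ)/2 ≤ (1:ℝ))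
    rwa [Real.rpow_one] at h
  have step3 : q ≤ 6 * (N0 ^ ((3:ℝ)/4) * N2 ^ ((5:ℝ)/4)) := by
    calc q ≤ 3 * Real.sqrt (2 * N0 * N1) * N2 := step1
      _ = 3 * (2:ℝ) ^ ((1:ℝ)/2) * (N0 ^ ((1:ℝ)/2) * N1 ^ ((1:ℝ)/2) * N2) := by
          rw [hs2]; ring
      _ ≤ 3 * (2:ℝ) ^ ((1:ℝ)/2)
            * (N0 ^ ((1:ℝ)/2) * (N0 ^ ((1:ℝ)/4) * N2 ^ ((1:ℝ)/4)) * N2) := by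
          apply mul_le_mul_of_nonneg_left ?_ (by positivity)
          exact mul_le_mul_of_nonneg_right
            (mul_le_mul_of_nonneg_left w2 (Real.rpow_nonneg h0 _)) h2n
      _ = 3 * (2:ℝ) ^ ((1:ℝ)/2) * (N0 ^ ((3:ℝ)/4) * N2 ^ ((5:ℝ)/4)) := by
          rw [show N0 ^ ((1:ℝ)/2) * (N0 ^ ((1:ℝ)/4) * N2 ^ ((1:ℝ)/4)) * N2
              = (N0 ^ ((1:ℝ)/2) * N0 ^ ((1:ℝ)/4)) * (N2 ^ ((1:ℝ)/4) * N2) from by ring,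
            eA, eB]
      _ ≤ 6 * (N0 ^ ((3:ℝ)/4) * N2 ^ ((5:ℝ)/4)) := by
          apply mul_le_mul_of_nonneg_right (by nlinarith [hsqrt2le]) (by positivity)
  have step4 : N2 ^ ((5:ℝ)/4) ≤ 5202 ^ 2 * 4 * (T ^ ((5:ℝ)/4) + N0 ^ ((5:ℝ)/4)) := by
    have c52 : (5202:ℝ) ^ ((5:ℝ)/4) ≤ 5202 ^ 2 := by
      have h := Real.rpow_le_rpow_of_exponent_le (x := (5202:ℝ)) (by norm_num)
        (by norm_num : (5:ℝ)/4 ≤ ((2:ℕ):ℝ))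
      rwa [Real.rpow_natCast] at h
    calc N2 ^ ((5:ℝ)/4) ≤ (5202 * (T + N0)) ^ ((5:ℝ)/4) :=
        Real.rpow_le_rpow h2n stepN2 (by norm_num)
      _ = (5202:ℝ) ^ ((5:ℝ)/4) * (T + N0) ^ ((5:ℝ)/4) :=
          Real.mul_rpow (by norm_num) (by positivity)
      _ ≤ 5202 ^ 2 * (4 * (T ^ ((5:ℝ)/4) + N0 ^ ((5:ℝ)/4))) :=
          mul_le_mul c52 (rpow54_add hT0 h0) (by positivity) (by positivity)
      _ = 5202 ^ 2 * 4 * (T ^ ((5:ℝ)/4) + N0 ^ ((5:ℝ)/4)) := by ring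
  have eT : T ^ ((5:ℝ)/4) = N0 ^ ((5:ℝ)/12) * N3 ^ ((5:ℝ)/6) := by
    rw [hT, Real.mul_rpow (Real.rpow_nonneg h0 _) (Real.rpow_nonneg h3n _),
      ← Real.rpow_mul h0, ← Real.rpow_mul h3n]
    norm_num
  have eU : N0 ^ ((3:ℝ)/4) * (N0 ^ ((5:ℝ)/12) * N3 ^ ((5:ℝ)/6))
      = N0 ^ ((7:ℝ)/6) * N3 ^ ((5:ℝ)/6) := by
    rw [show N0 ^ ((3:ℝ)/4) * (N0 ^ ((5:ℝ)/12) * N3 ^ ((5:ℝ)/6))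
        = (N0 ^ ((3:ℝ)/4) * N0 ^ ((5:ℝ)/12)) * N3 ^ ((5:ℝ)/6) from by ring,
      ← Real.rpow_add' h0 (by norm_num)]
    norm_num
  have eV : N0 ^ ((3:ℝ)/4) * N0 ^ ((5:ℝ)/4) = N0 ^ ((2:ℝ)) := by
    rw [← Real.rpow_add' h0 (by norm_num)]; norm_num
  have step5 : q ≤ 1000000000 * (N0 ^ ((7:ℝ)/6) * N3 ^ ((5:ℝ)/6) + N0 ^ ((2:ℝ))) := by
    calc q ≤ 6 * (N0 ^ ((3:ℝ)/4) * N2 ^ ((5:ℝ)/4)) := step3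
      _ ≤ 6 * (N0 ^ ((3:ℝ)/4) * (5202 ^ 2 * 4 * (T ^ ((5:ℝ)/4) + N0 ^ ((5:ℝ)/4)))) := by
          apply mul_le_mul_of_nonneg_left
            (mul_le_mul_of_nonneg_left step4 (Real.rpow_nonneg h0 _)) (by norm_num)
      _ = 6 * 5202 ^ 2 * 4 * (N0 ^ ((3:ℝ)/4) * T ^ ((5:ℝ)/4)
            + N0 ^ ((3:ℝ)/4) * N0 ^ ((5:ℝ)/4)) := by ring
      _ = 6 * 5202 ^ 2 * 4 * (N0 ^ ((3:ℝ)/4) * (N0 ^ ((5:ℝ)/12) * N3 ^ ((5:ℝ)/6))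
            + N0 ^ ((3:ℝ)/4) * N0 ^ ((5:ℝ)/4)) := by rw [eT]
      _ = 6 * 5202 ^ 2 * 4 * (N0 ^ ((7:ℝ)/6) * N3 ^ ((5:ℝ)/6) + N0 ^ ((2:ℝ))) := by
          rw [eU, eV]
      _ ≤ 1000000000 * (N0 ^ ((7:ℝ)/6) * N3 ^ ((5:ℝ)/6) + N0 ^ ((2:ℝ))) := by
          apply mul_le_mul_of_nonneg_right (by norm_num) (by positivity)
  have hfin : Q ^ ((1:ℝ)/4) = q ^ ((1:ℝ)/2) := by
    rw [← hq2, ← Real.rpow_natCast q 2, ← Real.rpow_mul hq0]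
    norm_num
  rw [hfin]
  set S := N0 ^ ((7:ℝ)/6) * N3 ^ ((5:ℝ)/6) with hS
  have hS0 : 0 ≤ S := by positivity
  have u1 : q ^ ((1:ℝ)/2) ≤ (1000000000 * (S + N0 ^ ((2:ℝ)))) ^ ((1:ℝ)/2) :=
    Real.rpow_le_rpow hq0 step5 (by norm_num)
  have u2 : ((1000000000:ℝ) * (S + N0 ^ ((2:ℝ)))) ^ ((1:ℝ)/2)
      ≤ 100000 * (S ^ ((1:ℝ)/2) + (N0 ^ ((2:ℝ))) ^ ((1:ℝ)/2)) := by
    rw [Real.mul_rpow (by norm_num) (by positivity)]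
    have c1 : ((1000000000:ℝ)) ^ ((1:ℝ)/2) ≤ 100000 := by
      rw [← Real.sqrt_eq_rpow]
      calc Real.sqrt 1000000000 ≤ Real.sqrt 10000000000 :=
          Real.sqrt_le_sqrt (by norm_num)
        _ = 100000 := by
            rw [show (10000000000:ℝ) = 100000 ^ 2 by norm_num,
              Real.sqrt_sq (by norm_num)]
    have c2 : (S + N0 ^ ((2:ℝ))) ^ ((1:ℝ)/2)
        ≤ S ^ ((1:ℝ)/2) + (N0 ^ ((2:ℝ))) ^ ((1:ℝ)/2) := by
      rw [← Real.sqrt_eq_rpow, ← Real.sqrt_eq_rpow, ← Real.sqrt_eq_rpow]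
      exact sqrt_add_le' hS0 (by positivity)
    exact mul_le_mul c1 c2 (by positivity) (by norm_num)
  have e1 : S ^ ((1:ℝ)/2) = N0 ^ ((7:ℝ)/12) * N3 ^ ((5:ℝ)/12) := by
    rw [hS, Real.mul_rpow (Real.rpow_nonneg h0 _) (Real.rpow_nonneg h3n _),
      ← Real.rpow_mul h0, ← Real.rpow_mul h3n]
    norm_num
  have e2 : (N0 ^ ((2:ℝ))) ^ ((1:ℝ)/2) = N0 := by
    rw [← Real.rpow_mul h0]; norm_num
  calc q ^ ((1:ℝ)/2) ≤ 100000 * (S ^ ((1:ℝ)/2) + (N0 ^ ((2:ℝ))) ^ ((1:ℝ)/2)) :=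
      le_trans u1 u2
    _ = 100000 * (N3 ^ ((5:ℝ)/12) * N0 ^ ((7:ℝ)/12) + N0) := by rw [e1, e2]; ring

end GNaux


/-- the Gagliardo–Nirenberg interpolation inequality
`‖v'‖_{L⁴(0,1)} ≤ C(‖v'''‖_{L²(0,1)}^{5/12} ‖v‖_{L²(0,1)}^{7/12} + ‖v‖_{L²(0,1)})`,
with a universal constant `C`, for `C³` functions vanishing at the endpoints. -/
theorem gagliardo_nirenberg_L4_deriv :
    ∃ C : ℝ, 0 < C ∧ ∀ v : ℝ → ℝ, ContDiff ℝ 3 v → v 0 = 0 → v 1 = 0 →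
      (∫ x in (0:ℝ)..1, |deriv v x| ^ 4) ^ ((1:ℝ)/4)
        ≤ C * ((∫ x in (0:ℝ)..1, |iteratedDeriv 3 v x| ^ 2) ^ ((5:ℝ)/24)
                 * (∫ x in (0:ℝ)..1, |v x| ^ 2) ^ ((7:ℝ)/24)
               + (∫ x in (0:ℝ)..1, |v x| ^ 2) ^ ((1:ℝ)/2)) := by
  refine ⟨100000, by norm_num, ?_⟩
  intro v hv hva hvb
  -- regularity bookkeeping
  set v1 := deriv v with hv1def
  set v2 := deriv v1 with hv2def
  set v3 := deriv v2 with hv3def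
  have hsucc3 : (3 : WithTop ℕ∞) = 2 + 1 := by norm_num
  have hstep := (contDiff_succ_iff_deriv).mp (hsucc3 ▸ hv)
  have hvd : Differentiable ℝ v := hstep.1
  have hv1smooth : ContDiff ℝ 2 v1 := hstep.2.2
  have hsucc2 : (2 : WithTop ℕ∞) = 1 + 1 := by norm_num
  have hstep2 := (contDiff_succ_iff_deriv).mp (hsucc2 ▸ hv1smooth)
  have hv1d : Differentiable ℝ v1 := hstep2.1
  have hv2smooth : ContDiff ℝ 1 v2 := hstep2.2.2
  have hstep3 := (contDiff_one_iff_deriv).mp hv2smooth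
  have hv2d : Differentiable ℝ v2 := hstep3.1
  have hv3c : Continuous v3 := hstep3.2
  have hvc : Continuous v := hv.continuous
  have hv1c : Continuous v1 := hv1smooth.continuous
  have hv2c : Continuous v2 := hv2smooth.continuous
  have hdv : ∀ x, HasDerivAt v (v1 x) x := fun x => (hvd x).hasDerivAt
  have hdv1 : ∀ x, HasDerivAt v1 (v2 x) x := fun x => (hv1d x).hasDerivAt
  have hdv2 : ∀ x, HasDerivAt v2 (v3 x) x := fun x => (hv2d x).hasDerivAt
  -- the four integrals
  set A0 := ∫ x in (0:ℝ)..1, v x ^ 2 with hA0def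
  set A1 := ∫ x in (0:ℝ)..1, v1 x ^ 2 with hA1def
  set A2 := ∫ x in (0:ℝ)..1, v2 x ^ 2 with hA2def
  set A3 := ∫ x in (0:ℝ)..1, v3 x ^ 2 with hA3def
  set Q := ∫ x in (0:ℝ)..1, v1 x ^ 4 with hQdef
  have h01 : (0:ℝ) ≤ 1 := by norm_num
  have hA0n : 0 ≤ A0 := intervalIntegral.integral_nonneg h01 (fun x _ => sq_nonneg _)
  have hA1n : 0 ≤ A1 := intervalIntegral.integral_nonneg h01 (fun x _ => sq_nonneg _)
  have hA2n : 0 ≤ A2 := intervalIntegral.integral_nonneg h01 (fun x _ => sq_nonneg _)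
  have hA3n : 0 ≤ A3 := intervalIntegral.integral_nonneg h01 (fun x _ => sq_nonneg _)
  have hQn : 0 ≤ Q := intervalIntegral.integral_nonneg h01
    (fun x _ => by positivity)
  set N0 := Real.sqrt A0 with hN0def
  set N1 := Real.sqrt A1 with hN1def
  set N2 := Real.sqrt A2 with hN2def
  set N3 := Real.sqrt A3 with hN3def
  -- Fact B : A1 ≤ N0 * N2  (integration by parts + Cauchy-Schwarz)
  have factB : N1 ^ 2 ≤ N0 * N2 := by
    have key : ∫ x in (0:ℝ)..1, v x * v2 x
        = v 1 * v1 1 - v 0 * v1 0 - ∫ x in (0:ℝ)..1, v1 x * v1 x :=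
      intervalIntegral.integral_mul_deriv_eq_deriv_mul
        (fun x _ => hdv x) (fun x _ => hdv1 x)
        (hv1c.intervalIntegrable _ _) (hv2c.intervalIntegrable _ _)
    rw [hva, hvb] at key
    have e1 : ∫ x in (0:ℝ)..1, v1 x * v1 x = A1 := by
      rw [hA1def]
      apply intervalIntegral.integral_congr
      intro x _; simp [pow_two]
    rw [e1] at key
    -- key : ∫ v * v2 = -A1  (after simplification)
    have hA1eq : A1 = -(∫ x in (0:ℝ)..1, v x * v2 x) := by linarith [key]
    have habs : -(∫ x in (0:ℝ)..1, v x * v2 x) ≤ ∫ x in (0:ℝ)..1, |v x| * |v2 x| := by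
      rw [← intervalIntegral.integral_neg]
      apply intervalIntegral.integral_mono_on h01
      · exact ((hvc.mul hv2c).neg).intervalIntegrable _ _
      · exact (hvc.abs.mul hv2c.abs).intervalIntegrable _ _
      · intro x _
        calc -(v x * v2 x) ≤ |v x * v2 x| := neg_le_abs _
          _ = |v x| * |v2 x| := abs_mul _ _
    have hcs := GNaux.cs h01 hvc.abs hv2c.abs
    simp_rw [sq_abs] at hcs
    have : A1 ≤ N0 * N2 := by
      rw [hA1eq]
      calc -(∫ x in (0:ℝ)..1, v x * v2 x) ≤ ∫ x in (0:ℝ)..1, |v x| * |v2 x| := habs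
        _ ≤ N0 * N2 := hcs
    calc N1 ^ 2 = A1 := Real.sq_sqrt hA1n
      _ ≤ N0 * N2 := this
  -- Agmon-type sup bound for v
  have agmon : ∀ x ∈ Icc (0:ℝ) 1, v x ^ 2 ≤ 2 * N0 * N1 := by
    intro x hx
    have key : ∫ t in (0:ℝ)..x, 2 * v t * v1 t = v x ^ 2 - v 0 ^ 2 := by
      apply intervalIntegral.integral_eq_sub_of_hasDerivAt
      · intro t _
        have h := (hdv t).pow 2
        norm_num at h
        exact h
      · exact (((continuous_const.mul hvc).mul hv1c).intervalIntegrable _ _)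
    rw [hva] at key
    have h1 : v x ^ 2 = ∫ t in (0:ℝ)..x, 2 * v t * v1 t := by rw [key]; ring
    have h2 : (∫ t in (0:ℝ)..x, 2 * v t * v1 t)
        ≤ ∫ t in (0:ℝ)..1, 2 * (|v t| * |v1 t|) := by
      calc (∫ t in (0:ℝ)..x, 2 * v t * v1 t)
          ≤ ∫ t in (0:ℝ)..x, 2 * (|v t| * |v1 t|) := by
            apply intervalIntegral.integral_mono_on hx.1
            · exact ((continuous_const.mul hvc).mul hv1c).intervalIntegrable _ _
            · exact (continuous_const.mul (hvc.abs.mul hv1c.abs)).intervalIntegrable _ _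
            · intro t _
              calc 2 * v t * v1 t ≤ |2 * v t * v1 t| := le_abs_self _
                _ = 2 * (|v t| * |v1 t|) := by
                    rw [abs_mul, abs_mul]
                    norm_num [mul_assoc]
        _ ≤ ∫ t in (0:ℝ)..1, 2 * (|v t| * |v1 t|) :=
            intervalIntegral.integral_mono_interval le_rfl hx.1 hx.2
              (Filter.Eventually.of_forall (fun t => by positivity))
              ((continuous_const.mul (hvc.abs.mul hv1c.abs)).intervalIntegrable _ _)
    have h3 : ∫ t in (0:ℝ)..1, 2 * (|v t| * |v1 t|)
        = 2 * ∫ t in (0:ℝ)..1, |v t| * |v1 t| := intervalIntegral.integral_const_mul _ _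
    have hcs := GNaux.cs h01 hvc.abs hv1c.abs
    simp_rw [sq_abs] at hcs
    calc v x ^ 2 = ∫ t in (0:ℝ)..x, 2 * v t * v1 t := h1
      _ ≤ ∫ t in (0:ℝ)..1, 2 * (|v t| * |v1 t|) := h2
      _ = 2 * ∫ t in (0:ℝ)..1, |v t| * |v1 t| := h3
      _ ≤ 2 * (N0 * N1) := by linarith [hcs]
      _ = 2 * N0 * N1 := by ring
  -- Fact A : Q ≤ 3 √(2 N0 N1) √Q N2
  have factA : Q ≤ 3 * Real.sqrt (2 * N0 * N1) * Real.sqrt Q * N2 := by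
    set M := Real.sqrt (2 * N0 * N1) with hMdef
    have hM0 : 0 ≤ M := Real.sqrt_nonneg _
    have hvM : ∀ x ∈ Icc (0:ℝ) 1, |v x| ≤ M := by
      intro x hx
      have := agmon x hx
      have h1 : |v x| = Real.sqrt (v x ^ 2) := (Real.sqrt_sq_eq_abs _).symm
      rw [h1, hMdef]
      exact Real.sqrt_le_sqrt this
    have key : ∫ x in (0:ℝ)..1, v x * (3 * v1 x ^ 2 * v2 x)
        = v 1 * v1 1 ^ 3 - v 0 * v1 0 ^ 3 - ∫ x in (0:ℝ)..1, v1 x * v1 x ^ 3 := by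
      apply intervalIntegral.integral_mul_deriv_eq_deriv_mul (u := v) (u' := v1)
        (v := fun x => v1 x ^ 3) (v' := fun x => 3 * v1 x ^ 2 * v2 x)
        (fun x _ => hdv x)
      · intro x _
        have h := (hdv1 x).pow 3
        norm_num at h
        exact h
      · exact hv1c.intervalIntegrable _ _
      · exact ((continuous_const.mul (hv1c.pow 2)).mul hv2c).intervalIntegrable _ _
    rw [hva, hvb] at key
    have e1 : ∫ x in (0:ℝ)..1, v1 x * v1 x ^ 3 = Q := by
      rw [hQdef]
      apply intervalIntegral.integral_congr
      intro x _; ring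
    rw [e1] at key
    have hQeq : Q = -(∫ x in (0:ℝ)..1, v x * (3 * v1 x ^ 2 * v2 x)) := by
      linarith [key]
    have habs : -(∫ x in (0:ℝ)..1, v x * (3 * v1 x ^ 2 * v2 x))
        ≤ ∫ x in (0:ℝ)..1, |v x| * (3 * v1 x ^ 2 * |v2 x|) := by
      rw [← intervalIntegral.integral_neg]
      apply intervalIntegral.integral_mono_on h01
      · exact ((hvc.mul ((continuous_const.mul (hv1c.pow 2)).mul hv2c)).neg).intervalIntegrable _ _
      · exact (hvc.abs.mul ((continuous_const.mul (hv1c.pow 2)).mul hv2c.abs)).intervalIntegrable _ _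
      · intro x _
        have e : |v x * (3 * v1 x ^ 2 * v2 x)| = |v x| * (3 * v1 x ^ 2 * |v2 x|) := by
          rw [abs_mul, abs_mul, abs_of_nonneg (by positivity : (0:ℝ) ≤ 3 * v1 x ^ 2)]
        calc -(v x * (3 * v1 x ^ 2 * v2 x))
            ≤ |v x * (3 * v1 x ^ 2 * v2 x)| := neg_le_abs _
          _ = |v x| * (3 * v1 x ^ 2 * |v2 x|) := e
    have hmono : ∫ x in (0:ℝ)..1, |v x| * (3 * v1 x ^ 2 * |v2 x|)
        ≤ ∫ x in (0:ℝ)..1, M * (3 * v1 x ^ 2 * |v2 x|) := by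
      apply intervalIntegral.integral_mono_on h01
      · exact (hvc.abs.mul ((continuous_const.mul (hv1c.pow 2)).mul hv2c.abs)).intervalIntegrable _ _
      · exact ((continuous_const.mul ((continuous_const.mul (hv1c.pow 2)).mul hv2c.abs))).intervalIntegrable _ _
      · intro x hx
        apply mul_le_mul_of_nonneg_right (hvM x hx) (by positivity)
    have hcs2 : ∫ x in (0:ℝ)..1, v1 x ^ 2 * |v2 x| ≤ Real.sqrt Q * N2 := by
      have hcs := GNaux.cs (f := fun x => v1 x ^ 2) h01 (hv1c.pow 2) hv2c.abs
      simp_rw [sq_abs] at hcs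
      have e2 : ∫ x in (0:ℝ)..1, (v1 x ^ 2) ^ 2 = Q := by
        rw [hQdef]
        apply intervalIntegral.integral_congr
        intro x _; ring
      rw [e2] at hcs
      exact hcs
    have e3 : ∫ x in (0:ℝ)..1, M * (3 * v1 x ^ 2 * |v2 x|)
        = 3 * M * ∫ x in (0:ℝ)..1, v1 x ^ 2 * |v2 x| := by
      rw [← intervalIntegral.integral_const_mul]
      apply intervalIntegral.integral_congr
      intro x _; ring
    have hQpos : 0 ≤ Real.sqrt Q * N2 :=
      mul_nonneg (Real.sqrt_nonneg _) (Real.sqrt_nonneg _)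
    calc Q = -(∫ x in (0:ℝ)..1, v x * (3 * v1 x ^ 2 * v2 x)) := hQeq
      _ ≤ ∫ x in (0:ℝ)..1, |v x| * (3 * v1 x ^ 2 * |v2 x|) := habs
      _ ≤ ∫ x in (0:ℝ)..1, M * (3 * v1 x ^ 2 * |v2 x|) := hmono
      _ = 3 * M * ∫ x in (0:ℝ)..1, v1 x ^ 2 * |v2 x| := e3
      _ ≤ 3 * M * (Real.sqrt Q * N2) := by
          apply mul_le_mul_of_nonneg_left hcs2 (by positivity)
      _ = 3 * M * Real.sqrt Q * N2 := by ring
  -- Fact C : interpolation for the middle derivative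
  have factC : 0 < N1 → N2 ^ 2 ≤ 2594 * (N1 * N3 + N1 ^ 2) := by
    intro hN1pos
    have hA1pos : 0 < A1 := by
      have := Real.sqrt_pos.mp (hN1def ▸ hN1pos)
      exact this
    have hpart : ∀ n : ℕ, 0 < n → A2 ≤ 648 * n ^ 2 * A1 + 2 / n ^ 2 * A3 := by
      intro n hn
      have := GNaux.partition_interp hv1c hv2c hv3c hdv1 hdv2 hn
      rw [← hA1def, ← hA2def, ← hA3def] at this
      exact this
    have hopt := GNaux.opt hA1pos hA3n hpart
    have e : Real.sqrt (A1 * A3) = N1 * N3 := by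
      rw [hN1def, hN3def, Real.sqrt_mul hA1n]
    calc N2 ^ 2 = A2 := Real.sq_sqrt hA2n
      _ ≤ 2594 * (Real.sqrt (A1 * A3) + A1) := hopt
      _ = 2594 * (N1 * N3 + N1 ^ 2) := by
          rw [e, hN1def, Real.sq_sqrt hA1n]
  -- apply the arithmetic lemma
  have main := GNaux.final_arith (Real.sqrt_nonneg A0) (Real.sqrt_nonneg A1)
    (Real.sqrt_nonneg A2) (Real.sqrt_nonneg A3) hQn factA factB factC
  -- rewrite the goal in terms of A0, A3, Q
  have g1 : ∫ x in (0:ℝ)..1, |v1 x| ^ 4 = Q := by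
    rw [hQdef]
    apply intervalIntegral.integral_congr
    intro x _
    exact (Even.pow_abs (by decide) _)
  have g2 : ∫ x in (0:ℝ)..1, |iteratedDeriv 3 v x| ^ 2 = A3 := by
    have hit : iteratedDeriv 3 v = v3 := by
      rw [hv3def, hv2def, hv1def]
      simp [iteratedDeriv_succ, iteratedDeriv_zero]
    rw [hit, hA3def]
    apply intervalIntegral.integral_congr
    intro x _
    exact (Even.pow_abs (by decide) _)
  have g3 : ∫ x in (0:ℝ)..1, |v x| ^ 2 = A0 := by
    rw [hA0def]
    apply intervalIntegral.integral_congr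
    intro x _
    exact (Even.pow_abs (by decide) _)
  rw [g1, g2, g3]
  -- convert sqrt powers to rpow of the integrals
  have c3 : N3 ^ ((5:ℝ)/12) = A3 ^ ((5:ℝ)/24) := by
    rw [hN3def, Real.sqrt_eq_rpow, ← Real.rpow_mul hA3n]
    norm_num
  have c0 : N0 ^ ((7:ℝ)/12) = A0 ^ ((7:ℝ)/24) := by
    rw [hN0def, Real.sqrt_eq_rpow, ← Real.rpow_mul hA0n]
    norm_num
  rw [c3, c0] at main
  rw [Real.sqrt_eq_rpow A0] at main
  exact main
end
end
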